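/- arXiv:1508.06881 — 5 statements merged into one kernel-verified Lean document; each statement's English description precedes it below -/
import Mathlib

section
/- For every n ≥ 1 and 1 ≤ r ≤ n, the Gårding cone Γ_r is a convex subset of ℝⁿ: if λ, μ ∈ Γ_r and t ∈ [0,1], then tλ + (1−t)μ ∈ Γ_r. -/
/-- The `r`-th elementary symmetric function of `x : Fin n → ℝ`. -/
def esymm (n r : ℕ) (x : Fin n → ℝ) : ℝ :=
  ∑ s ∈ Finset.powersetCard r (Finset.univ : Finset (Fin n)), ∏ i ∈ s, x i

/-- The Gårding cone `Γ_r = {x ∈ ℝⁿ : S_j(x) > 0 for j = 1, …, r}`. -/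
def gardingCone (n r : ℕ) : Set (Fin n → ℝ) :=
  {x | ∀ j : ℕ, 1 ≤ j → j ≤ r → 0 < esymm n j x}

namespace GardingAux

open Polynomial Finset Filter

/-- Elementary symmetric function over a general commutative ring. -/
noncomputable def esymA (R : Type*) [CommRing R] (n m : ℕ) (x : Fin n → R) : R :=
  ∑ s ∈ Finset.powersetCard m (Finset.univ : Finset (Fin n)), ∏ i ∈ s, x i

lemma esymA_real {n m : ℕ} (x : Fin n → ℝ) : esymA ℝ n m x = esymm n m x := rfl

variable {R : Type*} [CommRing R] {n : ℕ}

lemma esymA_zero (x : Fin n → R) : esymA R n 0 x = 1 := by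
  simp [esymA]

lemma esymA_congr {m : ℕ} {x y : Fin n → R} (h : ∀ i, x i = y i) :
    esymA R n m x = esymA R n m y := by
  have : x = y := funext h
  rw [this]

lemma esymA_smul {m : ℕ} (c : R) (x : Fin n → R) :
    esymA R n m (fun i => c * x i) = c ^ m * esymA R n m x := by
  unfold esymA
  rw [Finset.mul_sum]
  apply Finset.sum_congr rfl
  intro s hs
  rw [Finset.mem_powersetCard] at hs
  rw [Finset.prod_mul_distrib, Finset.prod_const, hs.2]

/-- The big product polynomial `∏ (X + C (u i))`. -/
noncomputable def bigP (R : Type*) [CommRing R] {n : ℕ} (u : Fin n → R) : R[X] :=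
  ∏ i : Fin n, (X + C (u i))

lemma bigP_monic (u : Fin n → R) : (bigP R u).Monic :=
  monic_prod_of_monic _ _ (fun i _ => monic_X_add_C (u i))

lemma bigP_natDegree [Nontrivial R] (u : Fin n → R) : (bigP R u).natDegree = n := by
  rw [bigP, natDegree_prod_of_monic _ _ (fun i _ => monic_X_add_C (u i))]
  simp [natDegree_X_add_C]

lemma bigP_coeff [Nontrivial R] (u : Fin n → R) {m : ℕ} (h : m ≤ n) :
    (bigP R u).coeff (n - m) = esymA R n m u := by
  rw [bigP, Finset.prod_X_add_C_coeff]
  · rw [esymA]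
    congr 1
    rw [card_univ, Fintype.card_fin]
    congr 1
    omega
  · rw [card_univ, Fintype.card_fin]; omega

lemma bigP_taylor (u : Fin n → R) (c : R) :
    taylor c (bigP R u) = bigP R (fun i => u i + c) := by
  rw [taylor_apply, bigP, bigP, Polynomial.prod_comp]
  apply Finset.prod_congr rfl
  intro i _
  rw [add_comp, X_comp, C_comp, C_add]
  ring

/-- Key identity: shifted elementary symmetric functions are evaluations of Hasse
derivatives of the big product polynomial. -/
lemma esymA_shift [Nontrivial R] (u : Fin n → R) (c : R) {m : ℕ} (h : m ≤ n) :
    esymA R n m (fun i => u i + c) = (hasseDeriv (n - m) (bigP R u)).eval c := by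
  rw [← bigP_coeff _ h, ← bigP_taylor, taylor_coeff]

lemma hasseDeriv_bigP_coeff [Nontrivial R] (u : Fin n → R) {m : ℕ} (h : m ≤ n) (k : ℕ) :
    (hasseDeriv (n - m) (bigP R u)).coeff k
      = if k ≤ m then ((k + (n - m)).choose (n - m) : R) * esymA R n (m - k) u else 0 := by
  rw [hasseDeriv_coeff]
  by_cases hk : k ≤ m
  · rw [if_pos hk]
    have : k + (n - m) = n - (m - k) := by omega
    rw [this, bigP_coeff _ (by omega)]
  · rw [if_neg hk]
    have : (bigP R u).coeff (k + (n - m)) = 0 := by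
      apply coeff_eq_zero_of_natDegree_lt
      rw [bigP_natDegree]; omega
    rw [this, mul_zero]

lemma hasseDeriv_bigP_coeff_top [Nontrivial R] (u : Fin n → R) {m : ℕ} (h : m ≤ n) :
    (hasseDeriv (n - m) (bigP R u)).coeff m = (n.choose (n - m) : R) := by
  rw [hasseDeriv_bigP_coeff u h m, if_pos le_rfl]
  have : m + (n - m) = n := by omega
  rw [this, Nat.sub_self, esymA_zero, mul_one]

lemma hasseDeriv_bigP_natDegree_le (u : Fin n → R) {m : ℕ} (h : m ≤ n) :
    (hasseDeriv (n - m) (bigP R u)).natDegree ≤ m := by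
  by_cases hR : Nontrivial R
  · refine (natDegree_hasseDeriv_le _ _).trans ?_
    rw [bigP_natDegree]; omega
  · have : Subsingleton R := not_nontrivial_iff_subsingleton.mp hR
    have : (hasseDeriv (n - m) (bigP R u)) = 0 := Subsingleton.elim _ _
    rw [this]; simp

/-- Positivity of shifted symmetric functions: if all `esymm l u ≥ 0` for `1 ≤ l ≤ m`,
then `esymm m (u + c) > 0` for `c > 0`. -/
lemma esymm_shift_pos {u : Fin n → ℝ} {m : ℕ} (hm1 : 1 ≤ m) (hmn : m ≤ n)
    (h : ∀ l, 1 ≤ l → l ≤ m → 0 ≤ esymm n l u) {c : ℝ} (hc : 0 < c) :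
    0 < esymm n m (fun i => u i + c) := by
  rw [← esymA_real, esymA_shift u c hmn]
  rw [eval_eq_sum_range' (lt_of_le_of_lt (hasseDeriv_bigP_natDegree_le u hmn) (Nat.lt_succ_self m))]
  have hterm : ∀ k ∈ Finset.range (m + 1),
      0 ≤ (hasseDeriv (n - m) (bigP ℝ u)).coeff k * c ^ k := by
    intro k hk
    rw [Finset.mem_range] at hk
    have hk' : k ≤ m := by omega
    rw [hasseDeriv_bigP_coeff u hmn k, if_pos hk']
    apply mul_nonneg (mul_nonneg (by positivity) ?_) (by positivity)
    rcases Nat.eq_zero_or_pos (m - k) with h0 | hpos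
    · rw [h0, esymA_zero]; norm_num
    · rw [esymA_real]; exact h (m - k) hpos (by omega)
  have htop : 0 < (hasseDeriv (n - m) (bigP ℝ u)).coeff m * c ^ m := by
    rw [hasseDeriv_bigP_coeff_top u hmn]
    have : 0 < (n.choose (n - m)) := Nat.choose_pos (by omega)
    positivity
  calc (0:ℝ) < (hasseDeriv (n - m) (bigP ℝ u)).coeff m * c ^ m := htop
    _ ≤ ∑ k ∈ Finset.range (m + 1), (hasseDeriv (n - m) (bigP ℝ u)).coeff k * c ^ k := by
        apply Finset.single_le_sum hterm
        simp

section Splits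

lemma splits_derivative (p : ℝ[X]) (hp : p.Splits) :
    (derivative p).Splits := by
  by_cases hd : p.natDegree ≤ 1
  · exact Splits.of_natDegree_le_one ((natDegree_derivative_le p).trans (by omega))
  push_neg at hd
  have hp0 : p ≠ 0 := by
    intro h; rw [h, natDegree_zero] at hd; omega
  have hcard : Multiset.card p.roots = p.natDegree := splits_iff_card_roots.mp hp
  have hne : (derivative p).coeff (p.natDegree - 1) ≠ 0 := by
    rw [coeff_derivative]
    have h1 : p.natDegree - 1 + 1 = p.natDegree := by omega
    rw [h1]
    apply mul_ne_zero (leadingCoeff_ne_zero.mpr hp0)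
    have : (0:ℝ) < (p.natDegree - 1 : ℕ) + 1 := by positivity
    push_cast at this ⊢
    linarith
  have hDle : (derivative p).natDegree ≤ p.natDegree - 1 := natDegree_derivative_le p
  have hDge : p.natDegree - 1 ≤ (derivative p).natDegree := le_natDegree_of_ne_zero hne
  have hD : (derivative p).natDegree = p.natDegree - 1 := le_antisymm hDle hDge
  rw [splits_iff_card_roots, hD]
  have h1 : Multiset.card p.roots ≤ Multiset.card (derivative p).roots + 1 :=
    card_roots_le_derivative p
  have h2 : Multiset.card (derivative p).roots ≤ (derivative p).natDegree :=
    card_roots' _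
  omega

lemma splits_iterate_derivative (k : ℕ) (p : ℝ[X]) (hp : p.Splits) :
    ((derivative)^[k] p).Splits := by
  induction k with
  | zero => exact hp
  | succ k ih => rw [Function.iterate_succ_apply']; exact splits_derivative _ ih

lemma splits_hasseDeriv (k : ℕ) (p : ℝ[X]) (hp : p.Splits) :
    (hasseDeriv k p).Splits := by
  have h : (k.factorial : ℝ) • hasseDeriv k p = (derivative)^[k] p := by
    have := congrFun (factorial_smul_hasseDeriv (R := ℝ) k) p
    rwa [LinearMap.smul_apply, ← Nat.cast_smul_eq_nsmul ℝ] at this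
  have hfac : (k.factorial : ℝ) ≠ 0 := by
    exact_mod_cast Nat.factorial_ne_zero k
  have h2 : hasseDeriv k p = C ((k.factorial : ℝ))⁻¹ * ((derivative)^[k] p) := by
    rw [← h, ← smul_eq_C_mul, smul_smul, inv_mul_cancel₀ hfac, one_smul]
  rw [h2]
  exact (Splits.C _).mul (splits_iterate_derivative k p hp)

lemma bigP_splits {n : ℕ} (u : Fin n → ℝ) : (bigP ℝ u).Splits := by
  apply Splits.prod
  intro i _
  have : X + C (u i) = X - C (-(u i)) := by rw [map_neg, sub_neg_eq_add]
  rw [this]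
  exact Splits.X_sub_C _

/-- The real polynomial whose evaluations give `esymm m (u + c·1)`. -/
noncomputable def eQ (n m : ℕ) (u : Fin n → ℝ) : ℝ[X] := hasseDeriv (n - m) (bigP ℝ u)

lemma eQ_splits {n : ℕ} (u : Fin n → ℝ) (m : ℕ) : (eQ n m u).Splits :=
  splits_hasseDeriv _ _ (bigP_splits u)

end Splits

section ComplexTransfer

lemma map_hasseDeriv {S : Type*} [CommRing S] (f : R →+* S) (k : ℕ) (p : R[X]) :
    Polynomial.map f (hasseDeriv k p) = hasseDeriv k (Polynomial.map f p) := by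
  ext j
  rw [coeff_map, hasseDeriv_coeff, hasseDeriv_coeff, coeff_map, map_mul, map_natCast]

lemma bigP_map {S : Type*} [CommRing S] (f : R →+* S) (u : Fin n → R) :
    Polynomial.map f (bigP R u) = bigP S (fun i => f (u i)) := by
  rw [bigP, Polynomial.map_prod]
  apply Finset.prod_congr rfl
  intro i _
  rw [Polynomial.map_add, map_X, map_C]

lemma eQ_coeff_top {n m : ℕ} (hmn : m ≤ n) (u : Fin n → ℝ) :
    (eQ n m u).coeff m = (n.choose (n - m) : ℝ) :=
  hasseDeriv_bigP_coeff_top u hmn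

lemma eQ_ne_zero {n m : ℕ} (hmn : m ≤ n) (u : Fin n → ℝ) : eQ n m u ≠ 0 := by
  intro h
  have h2 := eQ_coeff_top hmn u
  rw [h, coeff_zero] at h2
  have h3 : 0 < n.choose (n - m) := Nat.choose_pos (by omega)
  have h4 : (0:ℝ) < (n.choose (n - m) : ℝ) := by exact_mod_cast h3
  rw [← h2] at h4
  exact lt_irrefl _ h4

lemma eQ_natDegree_le {n : ℕ} (u : Fin n → ℝ) {m : ℕ} (h : m ≤ n) :
    (eQ n m u).natDegree ≤ m :=
  hasseDeriv_bigP_natDegree_le u h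

/-- evaluation identity over `ℂ` : symmetric functions of `v + c·1`, for a real vector `v`
and complex shift `c`, are values of the complexified `eQ`. -/
lemma esymA_complex_shift {n : ℕ} (v : Fin n → ℝ) (c : ℂ) {m : ℕ} (h : m ≤ n) :
    esymA ℂ n m (fun i => (v i : ℂ) + c)
      = ((eQ n m v).map (algebraMap ℝ ℂ)).eval c := by
  rw [esymA_shift _ c h, eQ, map_hasseDeriv, bigP_map]
  rfl

/-- The key non-vanishing fact: for a real vector `v` and `τ ≠ 0`,
`S_m(v + (τ i)·1) ≠ 0` over `ℂ`. -/
lemma esymA_shift_I_ne_zero {n : ℕ} (v : Fin n → ℝ) {τ : ℝ} (hτ : τ ≠ 0) {m : ℕ}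
    (hm1 : 1 ≤ m) (hmn : m ≤ n) :
    esymA ℂ n m (fun i => (v i : ℂ) + τ * Complex.I) ≠ 0 := by
  rw [esymA_complex_shift v _ hmn]
  have hsplit := eQ_splits v m
  have hfact := Splits.eq_prod_roots hsplit
  rw [hfact, Polynomial.map_mul, Polynomial.map_C, Polynomial.map_multiset_prod,
    eval_mul, eval_C]
  apply mul_ne_zero
  · simpa using leadingCoeff_ne_zero.mpr (eQ_ne_zero hmn v)
  · rw [eval_multiset_prod, Multiset.map_map, Multiset.map_map]
    intro hzero
    have h0 := Multiset.prod_eq_zero_iff.mp hzero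
    rw [Multiset.mem_map] at h0
    obtain ⟨a, _, ha⟩ := h0
    simp only [Function.comp_apply, Polynomial.map_sub, Polynomial.map_C, map_X,
      eval_sub, eval_X, eval_C] at ha
    have him := congrArg Complex.im ha.symm
    simp [Complex.mul_I_im] at him
    exact hτ him.symm

end ComplexTransfer

section PolGadget

variable {S : Type*} [CommRing S]

/-- The polynomial `s ↦ S_m(a + s b)` as an element of `R[X]`. -/
noncomputable def pol (R : Type*) [CommRing R] {n : ℕ} (m : ℕ) (a b : Fin n → R) : R[X] :=
  ∑ T ∈ Finset.powersetCard m (Finset.univ : Finset (Fin n)),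
    ∏ i ∈ T, (C (a i) + C (b i) * X)

lemma pol_eval (m : ℕ) (a b : Fin n → R) (s : R) :
    (pol R m a b).eval s = esymA R n m (fun i => a i + s * b i) := by
  rw [pol, eval_finset_sum, esymA]
  apply Finset.sum_congr rfl
  intro T _
  rw [eval_prod]
  apply Finset.prod_congr rfl
  intro i _
  rw [eval_add, eval_C, eval_mul, eval_C, eval_X, mul_comm]

lemma pol_factor_natDegree_le (a b : Fin n → R) (i : Fin n) :
    (C (a i) + C (b i) * X).natDegree ≤ 1 := by
  rw [add_comm]
  exact natDegree_linear_le

lemma pol_natDegree_le (m : ℕ) (a b : Fin n → R) : (pol R m a b).natDegree ≤ m := by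
  apply natDegree_sum_le_of_forall_le
  intro T hT
  rw [Finset.mem_powersetCard] at hT
  have h1 : (∏ i ∈ T, (C (a i) + C (b i) * X)).natDegree
      ≤ ∑ i ∈ T, (C (a i) + C (b i) * X).natDegree := natDegree_prod_le _ _
  have h2 : ∑ i ∈ T, (C (a i) + C (b i) * X).natDegree ≤ ∑ _i ∈ T, 1 :=
    Finset.sum_le_sum (fun i _ => pol_factor_natDegree_le a b i)
  have h3 : ∑ _i ∈ T, 1 = m := by rw [Finset.sum_const, smul_eq_mul, mul_one, hT.2]
  omega

lemma pol_coeff_top (m : ℕ) (a b : Fin n → R) : (pol R m a b).coeff m = esymA R n m b := by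
  rw [pol, finset_sum_coeff, esymA]
  apply Finset.sum_congr rfl
  intro T hT
  rw [Finset.mem_powersetCard] at hT
  have h1 : (∏ i ∈ T, (C (a i) + C (b i) * X)).coeff (T.card * 1) = ∏ i ∈ T, (C (a i) + C (b i) * X).coeff 1 :=
    coeff_prod_of_natDegree_le (s := T) _ 1 (fun p _ => pol_factor_natDegree_le a b p)
  rw [mul_one, hT.2] at h1
  rw [h1]
  apply Finset.prod_congr rfl
  intro i _
  simp

lemma pol_map (f : R →+* S) (m : ℕ) (a b : Fin n → R) :
    Polynomial.map f (pol R m a b) = pol S m (fun i => f (a i)) (fun i => f (b i)) := by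
  rw [pol, pol, Polynomial.map_sum]
  apply Finset.sum_congr rfl
  intro T _
  rw [Polynomial.map_prod]
  apply Finset.prod_congr rfl
  intro i _
  simp

end PolGadget

section Tendsto

/-- coefficientwise convergence of products of linear polynomials. -/
lemma tendsto_coeff_prod_linear (T : Finset (Fin n))
    (A B : ℕ → Fin n → ℂ) (a b : Fin n → ℂ)
    (hA : ∀ i, Tendsto (fun k => A k i) atTop (nhds (a i)))
    (hB : ∀ i, Tendsto (fun k => B k i) atTop (nhds (b i))) (j : ℕ) :
    Tendsto (fun k => (∏ i ∈ T, (C (A k i) + C (B k i) * X)).coeff j) atTop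
      (nhds ((∏ i ∈ T, (C (a i) + C (b i) * X)).coeff j)) := by
  classical
  induction T using Finset.induction generalizing j with
  | empty =>
    simp only [Finset.prod_empty]
    exact tendsto_const_nhds
  | @insert i T hiT ih =>
    simp only [Finset.prod_insert hiT, coeff_mul]
    apply tendsto_finset_sum
    intro p _
    apply Filter.Tendsto.mul _ (ih p.2)
    -- coeff of linear factor
    match hp : p.1 with
    | 0 =>
      simp only [coeff_add, coeff_C_zero, coeff_C_mul, coeff_X_zero, mul_zero, add_zero]
      exact hA i
    | 1 =>
      simp only [coeff_add, coeff_C, coeff_C_mul, coeff_X_one, mul_one]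
      norm_num
      exact hB i
    | (q+2) =>
      have hz : ∀ (c d : ℂ), (C c + C d * X).coeff (q+2) = 0 := by
        intro c d
        apply coeff_eq_zero_of_natDegree_lt
        have := pol_factor_natDegree_le (n := n) (fun _ => c) (fun _ => d) i
        omega
      simp only [hz]
      exact tendsto_const_nhds

end Tendsto

section RootLimits

/-- Vieta coefficients for `∏ (X - C (lam i))`. -/
lemma prodlin_coeff {m : ℕ} (lam : Fin m → ℂ) {j : ℕ} (hj : j ≤ m) :
    (∏ i : Fin m, (X - C (lam i))).coeff j = (-1) ^ (m - j) * esymA ℂ m (m - j) lam := by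
  have h1 : (∏ i : Fin m, (X - C (lam i)))
      = (Multiset.map (fun a => X - C a) (Multiset.map lam Finset.univ.val)).prod := by
    rw [Multiset.map_map]
    rfl
  have hcard : Multiset.card (Multiset.map lam Finset.univ.val) = m := by
    rw [Multiset.card_map, Finset.card_val, card_univ, Fintype.card_fin]
  rw [h1, Multiset.prod_X_sub_C_coeff, hcard]
  · congr 1
    rw [Finset.esymm_map_val, esymA]
  · rw [hcard]
    omega

lemma prodlin_monic {m : ℕ} (lam : Fin m → ℂ) :
    (∏ i : Fin m, (X - C (lam i))).Monic :=
  monic_prod_of_monic _ _ (fun i _ => monic_X_sub_C (lam i))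

lemma prodlin_natDegree {m : ℕ} (lam : Fin m → ℂ) :
    (∏ i : Fin m, (X - C (lam i))).natDegree = m := by
  rw [natDegree_prod_of_monic _ _ (fun i _ => monic_X_sub_C (lam i))]
  simp

lemma prodlin_coeff_top {m : ℕ} (lam : Fin m → ℂ) :
    (∏ i : Fin m, (X - C (lam i))).coeff m = 1 := by
  have := (prodlin_monic lam).coeff_natDegree
  rwa [prodlin_natDegree] at this

/-- convergence of elementary symmetric functions. -/
lemma tendsto_esymA {m q : ℕ} (Λ : ℕ → Fin m → ℂ) (lam : Fin m → ℂ)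
    (h : ∀ i, Tendsto (fun k => Λ k i) atTop (nhds (lam i))) :
    Tendsto (fun k => esymA ℂ m q (Λ k)) atTop (nhds (esymA ℂ m q lam)) := by
  unfold esymA
  apply tendsto_finset_sum
  intro t _
  exact tendsto_finset_prod _ (fun i _ => h i)

/-- Any root of a polynomial of degree `≤ m` with bounded coefficients and lower-bounded
leading coefficient is bounded. -/
lemma root_bound {m : ℕ} (hm : 1 ≤ m) {Q : ℂ[X]} (hdeg : Q.natDegree ≤ m) {z : ℂ}
    (hz : Q.eval z = 0) {A c₀ : ℝ}
    (hA : ∀ j, j < m → ‖Q.coeff j‖ ≤ A) (hc : c₀ ≤ ‖Q.coeff m‖)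
    (hc0 : 0 < c₀) : ‖z‖ ≤ max 1 (m * A / c₀) := by
  rcases le_or_gt (‖z‖) 1 with h1 | h1
  · exact le_max_of_le_left h1
  apply le_max_of_le_right
  have heval := eval_eq_sum_range' (lt_of_le_of_lt hdeg (Nat.lt_succ_self m)) z
  rw [hz] at heval
  rw [Finset.sum_range_succ] at heval
  have hml : Q.coeff m * z ^ m = -∑ j ∈ Finset.range m, Q.coeff j * z ^ j := by
    rw [eq_neg_iff_add_eq_zero, add_comm]
    exact heval.symm
  have habs : ‖Q.coeff m‖ * ‖z‖ ^ m
      ≤ ∑ j ∈ Finset.range m, A * ‖z‖ ^ j := by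
    calc ‖Q.coeff m‖ * ‖z‖ ^ m
        = ‖Q.coeff m * z ^ m‖ := by rw [norm_mul, norm_pow]
      _ = ‖∑ j ∈ Finset.range m, Q.coeff j * z ^ j‖ := by rw [hml, norm_neg]
      _ ≤ ∑ j ∈ Finset.range m, ‖Q.coeff j * z ^ j‖ :=
          norm_sum_le _ _
      _ ≤ ∑ j ∈ Finset.range m, A * ‖z‖ ^ j := by
          apply Finset.sum_le_sum
          intro j hj
          rw [Finset.mem_range] at hj
          rw [norm_mul, norm_pow]
          exact mul_le_mul_of_nonneg_right (hA j hj) (by positivity)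
  have hA0 : 0 ≤ A := le_trans (norm_nonneg _) (hA 0 (by omega))
  have hstep : ∑ j ∈ Finset.range m, A * ‖z‖ ^ j
      ≤ m * A * ‖z‖ ^ (m - 1) := by
    have : ∀ j ∈ Finset.range m, A * ‖z‖ ^ j ≤ A * ‖z‖ ^ (m-1) := by
      intro j hj
      rw [Finset.mem_range] at hj
      apply mul_le_mul_of_nonneg_left _ hA0
      exact pow_le_pow_right₀ (le_of_lt h1) (by omega)
    calc ∑ j ∈ Finset.range m, A * ‖z‖ ^ j
        ≤ ∑ _j ∈ Finset.range m, A * ‖z‖ ^ (m-1) := Finset.sum_le_sum this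
      _ = m * A * ‖z‖ ^ (m-1) := by
          rw [Finset.sum_const, Finset.card_range, nsmul_eq_mul]; ring
  have hzm : ‖z‖ ^ m = ‖z‖ * ‖z‖ ^ (m - 1) := by
    rw [← pow_succ']
    congr 1
    omega
  have hfinal : c₀ * ‖z‖ * ‖z‖ ^ (m-1)
      ≤ m * A * ‖z‖ ^ (m-1) := by
    calc c₀ * ‖z‖ * ‖z‖ ^ (m-1)
        = c₀ * (‖z‖ * ‖z‖ ^ (m-1)) := by ring
      _ ≤ ‖Q.coeff m‖ * (‖z‖ * ‖z‖ ^ (m-1)) := by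
          apply mul_le_mul_of_nonneg_right hc (by positivity)
      _ = ‖Q.coeff m‖ * ‖z‖ ^ m := by rw [← hzm]
      _ ≤ ∑ j ∈ Finset.range m, A * ‖z‖ ^ j := habs
      _ ≤ m * A * ‖z‖ ^ (m-1) := hstep
  have hpow : (0:ℝ) < ‖z‖ ^ (m-1) := by positivity
  have h2 : c₀ * ‖z‖ ≤ m * A := le_of_mul_le_mul_right (by linarith [hfinal]) hpow
  rw [div_eq_mul_inv]
  calc ‖z‖ = c₀ * ‖z‖ * c₀⁻¹ := by field_simp
    _ ≤ m * A * c₀⁻¹ := by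
        apply mul_le_mul_of_nonneg_right h2 (by positivity)

/-- The key compactness lemma: a coefficientwise convergent sequence of fully factored
polynomials (with nonvanishing limit leading coefficient) has a subsequence along which the
root vectors converge to a root vector of the limit polynomial. -/
lemma roots_subseq {m : ℕ} (hm : 1 ≤ m)
    (c : ℕ → ℂ) (Λ : ℕ → Fin m → ℂ) (c0 : ℂ) (hc0 : c0 ≠ 0)
    (Q : ℂ[X]) (hQdeg : Q.natDegree ≤ m) (hQc : Q.coeff m = c0)
    (hcc : Tendsto c atTop (nhds c0))
    (hcoeff : ∀ j, Tendsto (fun k => (C (c k) * ∏ i : Fin m, (X - C (Λ k i))).coeff j)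
      atTop (nhds (Q.coeff j))) :
    ∃ (φ : ℕ → ℕ) (lam : Fin m → ℂ), StrictMono φ ∧
      Q = C c0 * ∏ i : Fin m, (X - C (lam i)) ∧
      ∀ i, Tendsto (fun k => Λ (φ k) i) atTop (nhds (lam i)) := by
  set P : ℕ → ℂ[X] := fun k => C (c k) * ∏ i : Fin m, (X - C (Λ k i)) with hP
  set A : ℝ := 1 + ∑ j ∈ Finset.range m, ‖Q.coeff j‖ with hA
  have hAj : ∀ j, j < m → ‖Q.coeff j‖ + 1 ≤ A := by
    intro j hj
    rw [hA]
    have h1 : ‖Q.coeff j‖ ≤ ∑ l ∈ Finset.range m, ‖Q.coeff l‖ :=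
      Finset.single_le_sum (fun l _ => norm_nonneg _) (Finset.mem_range.mpr hj)
    linarith
  -- eventual bounds
  have hev : ∀ᶠ k in atTop, (∀ j ∈ Finset.range m, ‖(P k).coeff j‖ ≤ A)
      ∧ ‖c0‖ / 2 ≤ ‖(P k).coeff m‖ := by
    apply Filter.Eventually.and
    · rw [eventually_all_finset]
      intro j hj
      rw [Finset.mem_range] at hj
      have h2 : Tendsto (fun k => ‖(P k).coeff j‖) atTop
          (nhds (‖Q.coeff j‖)) := (hcoeff j).norm
      have h3 := h2.eventually_lt_const (show ‖Q.coeff j‖ < ‖Q.coeff j‖ + 1 by linarith)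
      exact h3.mono (fun k hk => le_trans (le_of_lt hk) (hAj j hj))
    · have h2 : Tendsto (fun k => ‖(P k).coeff m‖) atTop
          (nhds (‖Q.coeff m‖)) := (hcoeff m).norm
      have hpos : 0 < ‖c0‖ := by
        simpa using hc0
      have h3 : ‖c0‖ / 2 < ‖Q.coeff m‖ := by
        rw [hQc]; linarith
      exact (h2.eventually_const_lt h3).mono (fun k hk => le_of_lt hk)
  obtain ⟨N, hN⟩ := Filter.eventually_atTop.mp hev
  -- root bound
  set B : ℝ := max 1 (m * A / (‖c0‖ / 2)) with hB
  have hroot : ∀ k, ∀ i, (P k).eval (Λ k i) = 0 := by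
    intro k i
    rw [hP]
    simp only [eval_mul, eval_C, eval_prod]
    apply mul_eq_zero_of_right
    apply Finset.prod_eq_zero (Finset.mem_univ i)
    simp
  have hPdeg : ∀ k, (P k).natDegree ≤ m := by
    intro k
    rw [hP]
    refine le_trans (natDegree_mul_le) ?_
    rw [natDegree_C, prodlin_natDegree]
    omega
  have hbdd : ∀ k, N ≤ k → ∀ i, ‖Λ k i‖ ≤ B := by
    intro k hk i
    have hNk := hN k hk
    apply root_bound hm (hPdeg k) (hroot k i) _ hNk.2 (by simpa using hc0)
    intro j hj
    exact hNk.1 j (Finset.mem_range.mpr hj)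
  -- compactness
  have hcompact : IsCompact (Set.univ.pi (fun _ : Fin m => Metric.closedBall (0:ℂ) B)) :=
    isCompact_univ_pi (fun i => isCompact_closedBall _ _)
  have hmem : ∀ k, (fun i => Λ (k + N) i) ∈ Set.univ.pi (fun _ : Fin m => Metric.closedBall (0:ℂ) B) := by
    intro k
    intro i _
    rw [Metric.mem_closedBall, dist_zero_right]
    exact hbdd (k + N) (by omega) i
  obtain ⟨lam, _, ψ, hψ, hconv⟩ := hcompact.tendsto_subseq hmem
  rw [tendsto_pi_nhds] at hconv
  have hφmono : StrictMono (fun k => ψ k + N) := by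
    intro a b hab
    have := hψ hab
    simp only []
    omega
  refine ⟨fun k => ψ k + N, lam, hφmono, ?_, ?_⟩
  · -- limit identity
    apply Polynomial.ext
    intro j
    have hsub : Tendsto (fun k => (P (ψ k + N)).coeff j) atTop (nhds (Q.coeff j)) :=
      (hcoeff j).comp hφmono.tendsto_atTop
    have hform : Tendsto (fun k => (P (ψ k + N)).coeff j) atTop
        (nhds ((C c0 * ∏ i : Fin m, (X - C (lam i))).coeff j)) := by
      simp only [hP, coeff_C_mul]
      apply Filter.Tendsto.mul
      · exact hcc.comp hφmono.tendsto_atTop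
      · rcases le_or_gt j m with hj | hj
        · simp only [prodlin_coeff _ hj]
          apply Filter.Tendsto.const_mul
          exact tendsto_esymA _ _ (fun i => hconv i)
        · have hz : ∀ (g : Fin m → ℂ), (∏ i : Fin m, (X - C (g i))).coeff j = 0 := by
            intro g
            apply coeff_eq_zero_of_natDegree_lt
            rw [prodlin_natDegree]
            exact hj
          simp only [hz]
          exact tendsto_const_nhds
    exact tendsto_nhds_unique hsub hform
  · exact fun i => hconv i

end RootLimits

section RootVec

lemma exists_rootVec {m : ℕ} {Q : ℂ[X]} (hdeg : Q.natDegree ≤ m) {c : ℂ}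
    (hc : Q.coeff m = c) (hc0 : c ≠ 0) :
    ∃ lam : Fin m → ℂ, Q = C c * ∏ i : Fin m, (X - C (lam i)) := by
  have hDeq : Q.natDegree = m := le_antisymm hdeg (le_natDegree_of_ne_zero (hc ▸ hc0))
  have hsplit : Q.Splits := IsAlgClosed.splits Q
  have hcard : Multiset.card Q.roots = m := by
    rw [splits_iff_card_roots.mp hsplit, hDeq]
  set L := Q.roots.toList with hLdef
  have hlen : L.length = m := by rw [hLdef, Multiset.length_toList, hcard]
  refine ⟨fun i => L.get (Fin.cast hlen.symm i), ?_⟩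
  have hfact := Splits.eq_prod_roots hsplit
  have hlc : Q.leadingCoeff = c := by rw [leadingCoeff, hDeq, hc]
  rw [hlc] at hfact
  rw [hfact]
  congr 1
  have h1 : Q.roots = (L : Multiset ℂ) := (Multiset.coe_toList _).symm
  rw [h1, Multiset.map_coe, Multiset.prod_coe]
  conv_lhs => rw [← List.ofFn_get L]
  rw [List.map_ofFn, List.prod_ofFn]
  exact (Equiv.prod_comp (finCongr hlen.symm) _).symm

end RootVec

section Core

lemma esymA_map {S : Type*} [CommRing S] (f : R →+* S) {m : ℕ} (x : Fin n → R) :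
    f (esymA R n m x) = esymA S n m (fun i => f (x i)) := by
  rw [esymA, esymA, map_sum]
  apply Finset.sum_congr rfl
  intro T _
  rw [map_prod]

lemma esymA_one_val {m : ℕ} : esymA ℝ n m (fun _ => (1:ℝ)) = (n.choose m : ℝ) := by
  rw [esymA]
  rw [Finset.sum_congr rfl (fun T _ => Finset.prod_const_one)]
  rw [Finset.sum_const, nsmul_eq_mul, mul_one]
  congr 1
  rw [Finset.card_powersetCard, card_univ, Fintype.card_fin]

lemma tendsto_pol_coeff {m : ℕ} (A B : ℕ → Fin n → ℂ) (a b : Fin n → ℂ)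
    (hA : ∀ i, Tendsto (fun k => A k i) atTop (nhds (a i)))
    (hB : ∀ i, Tendsto (fun k => B k i) atTop (nhds (b i))) (j : ℕ) :
    Tendsto (fun k => (pol ℂ m (A k) (B k)).coeff j) atTop
      (nhds ((pol ℂ m a b).coeff j)) := by
  unfold pol
  simp only [finset_sum_coeff]
  exact tendsto_finset_sum _ (fun T _ => tendsto_coeff_prod_linear T A B a b hA hB j)

lemma exists_const_index_subseq {m : ℕ} (f : ℕ → Fin m) :
    ∃ (i : Fin m) (φ : ℕ → ℕ), StrictMono φ ∧ ∀ k, f (φ k) = i := by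
  have hfin : ∃ i, ∃ᶠ k in atTop, f k = i := by
    by_contra h
    push_neg at h
    have h2 : ∀ i : Fin m, ∀ᶠ k in atTop, f k ≠ i := by
      intro i
      have := h i
      exact this
    have h3 : ∀ᶠ k in atTop, ∀ i ∈ (Finset.univ : Finset (Fin m)), f k ≠ i :=
      (eventually_all_finset _).mpr (fun i _ => h2 i)
    rcases h3.exists with ⟨k, hk⟩
    exact hk (f k) (Finset.mem_univ _) rfl
  obtain ⟨i, hi⟩ := hfin
  obtain ⟨φ, hφ, hφ2⟩ := Filter.extraction_of_frequently_atTop hi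
  exact ⟨i, φ, hφ, hφ2⟩

variable (n) in
/-- The complexified family polynomial: `s ↦ S_m(u + i τ 1 + s d)`. -/
noncomputable def qpol (m : ℕ) (u : Fin n → ℝ) (τ : ℝ) (d : Fin n → ℝ) : ℂ[X] :=
  pol ℂ m (fun i => (u i : ℂ) + τ * Complex.I) (fun i => (d i : ℂ))

lemma qpol_natDegree_le (m : ℕ) (u : Fin n → ℝ) (τ : ℝ) (d : Fin n → ℝ) :
    (qpol n m u τ d).natDegree ≤ m := pol_natDegree_le _ _ _

lemma qpol_coeff_top (m : ℕ) (u : Fin n → ℝ) (τ : ℝ) (d : Fin n → ℝ) :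
    (qpol n m u τ d).coeff m = ((esymm n m d : ℝ) : ℂ) := by
  rw [qpol, pol_coeff_top, ← esymA_real]
  rw [show (fun i => ((d i : ℝ) : ℂ)) = fun i => algebraMap ℝ ℂ (d i) from rfl]
  exact (esymA_map (algebraMap ℝ ℂ) d).symm

/-- No real roots for `τ ≠ 0`. -/
lemma qpol_no_real_root {m : ℕ} (hm1 : 1 ≤ m) (hmn : m ≤ n)
    (u : Fin n → ℝ) {τ : ℝ} (hτ : τ ≠ 0) (d : Fin n → ℝ) {z : ℂ} (hz : z.im = 0) :
    (qpol n m u τ d).eval z ≠ 0 := by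
  rw [qpol, pol_eval]
  have hzre : z = (z.re : ℂ) := Complex.ext rfl (by simp [hz])
  have hcongr : (fun i => ((u i : ℂ) + τ * Complex.I) + z * (d i : ℂ))
      = fun i => ((u i + z.re * d i : ℝ) : ℂ) + τ * Complex.I := by
    funext i
    conv_lhs => rw [hzre]
    push_cast
    ring
  rw [hcongr]
  exact esymA_shift_I_ne_zero _ hτ hm1 hmn

/-- roots of mapped split real polynomials are real. -/
lemma im_eq_zero_of_root_map (p : ℝ[X]) (hp : p.Splits) {w : ℂ}
    (hw : ((p.map (algebraMap ℝ ℂ)).eval w) = 0) (hp0 : p ≠ 0) : w.im = 0 := by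
  have hfact := Splits.eq_prod_roots hp
  rw [hfact, Polynomial.map_mul, Polynomial.map_C, Polynomial.map_multiset_prod,
    eval_mul, eval_C] at hw
  rcases mul_eq_zero.mp hw with h1 | h2
  · exfalso
    rw [show (algebraMap ℝ ℂ) p.leadingCoeff = ((p.leadingCoeff : ℝ) : ℂ) from rfl,
      Complex.ofReal_eq_zero] at h1
    exact leadingCoeff_ne_zero.mpr hp0 h1
  · rw [eval_multiset_prod, Multiset.map_map, Multiset.map_map] at h2
    have h0 := Multiset.prod_eq_zero_iff.mp h2
    rw [Multiset.mem_map] at h0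
    obtain ⟨a, _, ha⟩ := h0
    simp only [Function.comp_apply, Polynomial.map_sub, Polynomial.map_C, map_X,
      eval_sub, eval_X, eval_C] at ha
    have hw2 : w = algebraMap ℝ ℂ a := sub_eq_zero.mp ha
    rw [hw2, show (algebraMap ℝ ℂ) a = ((a : ℝ) : ℂ) from rfl]
    simp

/-- Base case: in direction `1`, all roots have imaginary part `-τ`. -/
lemma qpol_one_roots {m : ℕ} (hm1 : 1 ≤ m) (hmn : m ≤ n)
    (u : Fin n → ℝ) (τ : ℝ) {z : ℂ}
    (hz : (qpol n m u τ (fun _ => 1)).eval z = 0) : z.im = -τ := by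
  have hiden : qpol n m u τ (fun _ => 1)
      = taylor ((τ:ℂ) * Complex.I) ((eQ n m u).map (algebraMap ℝ ℂ)) := by
    apply Polynomial.funext
    intro s
    rw [taylor_eval, qpol, pol_eval]
    have hcongr : (fun i => ((u i : ℂ) + τ * Complex.I) + s * ((1:ℝ) : ℂ))
        = fun i => (u i : ℂ) + (s + τ * Complex.I) := by
      funext i
      push_cast
      ring
    rw [hcongr]
    exact esymA_complex_shift u _ hmn
  rw [hiden, taylor_eval] at hz
  have him := im_eq_zero_of_root_map (eQ n m u) (eQ_splits u m) hz (eQ_ne_zero hmn u)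
  simp only [Complex.add_im, Complex.mul_im, Complex.ofReal_re, Complex.I_im,
    Complex.ofReal_im, Complex.I_re, mul_one, mul_zero, add_zero, zero_mul] at him
  linarith [him]

end Core

section Path

variable (n) in
/-- The path of directions from `(1,…,1)` (at `θ = 0`) to `x` (at `θ = 1`). -/
def pathD (x : Fin n → ℝ) (θ : ℝ) : Fin n → ℝ := fun i => (1 - θ) + θ * x i

lemma pathD_zero (x : Fin n → ℝ) : pathD n x 0 = fun _ => 1 := by
  funext i; simp [pathD]

lemma pathD_one (x : Fin n → ℝ) : pathD n x 1 = x := by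
  funext i; simp [pathD]

lemma esymm_smul (l : ℕ) (c : ℝ) (x : Fin n → ℝ) :
    esymm n l (fun i => c * x i) = c ^ l * esymm n l x := by
  rw [← esymA_real, ← esymA_real, esymA_smul]

/-- Positivity of all relevant symmetric functions along the path. -/
lemma path_esymm_pos {m : ℕ} (hmn : m ≤ n) (x : Fin n → ℝ)
    (hx : ∀ l, 1 ≤ l → l ≤ m → 0 < esymm n l x) {θ : ℝ} (hθ : θ ∈ Set.Icc (0:ℝ) 1) :
    ∀ l, 1 ≤ l → l ≤ m → 0 < esymm n l (pathD n x θ) := by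
  intro l hl1 hlm
  obtain ⟨hθ0, hθ1⟩ := hθ
  rcases eq_or_lt_of_le hθ1 with h1 | h1
  · rw [h1, pathD_one]
    exact hx l hl1 hlm
  · have hc : 0 < 1 - θ := by linarith
    have hform : pathD n x θ = fun i => (fun j => θ * x j) i + (1 - θ) := by
      funext i
      simp [pathD]
      ring
    rw [hform]
    apply esymm_shift_pos hl1 (le_trans hlm hmn) _ hc
    intro l' hl'1 hl'm
    rw [esymm_smul]
    have := hx l' hl'1 (le_trans hl'm hlm)
    positivity

lemma tendsto_esymm_real {N q : ℕ} (V : ℕ → Fin N → ℝ) (v : Fin N → ℝ)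
    (h : ∀ i, Tendsto (fun k => V k i) atTop (nhds (v i))) :
    Tendsto (fun k => esymm N q (V k)) atTop (nhds (esymm N q v)) := by
  unfold esymm
  apply tendsto_finset_sum
  intro t _
  exact tendsto_finset_prod _ (fun i _ => h i)

lemma tendsto_pathD (x : Fin n → ℝ) (θseq : ℕ → ℝ) (θ0 : ℝ)
    (hconv : Tendsto θseq atTop (nhds θ0)) (i : Fin n) :
    Tendsto (fun k => pathD n x (θseq k) i) atTop (nhds (pathD n x θ0 i)) := by
  unfold pathD
  exact ((tendsto_const_nhds.sub hconv).add (hconv.mul tendsto_const_nhds))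

lemma coord_mem_roots {m : ℕ} {Q : ℂ[X]} {c : ℂ} {lam : Fin m → ℂ}
    (hfact : Q = C c * ∏ i : Fin m, (X - C (lam i))) (hc : c ≠ 0) (i : Fin m) :
    lam i ∈ Q.roots := by
  rw [mem_roots']
  constructor
  · rw [hfact]
    exact mul_ne_zero (C_ne_zero.mpr hc) (prodlin_monic lam).ne_zero
  · rw [IsRoot, hfact, eval_mul, eval_C, eval_prod]
    apply mul_eq_zero_of_right
    apply Finset.prod_eq_zero (Finset.mem_univ i)
    simp

lemma root_eq_coord {m : ℕ} {Q : ℂ[X]} {c : ℂ} {lam : Fin m → ℂ}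
    (hfact : Q = C c * ∏ i : Fin m, (X - C (lam i))) (hc : c ≠ 0) {z : ℂ}
    (hz : z ∈ Q.roots) : ∃ i, z = lam i := by
  have hz2 := (mem_roots'.mp hz).2
  rw [IsRoot, hfact, eval_mul, eval_C, eval_prod] at hz2
  rcases mul_eq_zero.mp hz2 with h1 | h2
  · exact absurd h1 hc
  · obtain ⟨i, _, hi⟩ := Finset.prod_eq_zero_iff.mp h2
    rw [eval_sub, eval_X, eval_C, sub_eq_zero] at hi
    exact ⟨i, hi⟩

/-- Packaged limit construction along the path. -/
lemma qpol_limit {m : ℕ} (hm1 : 1 ≤ m) (hmn : m ≤ n) (u x : Fin n → ℝ)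
    (hx : ∀ l, 1 ≤ l → l ≤ m → 0 < esymm n l x) (τ : ℝ)
    (θseq : ℕ → ℝ) (θ0 : ℝ) (hmem : ∀ k, θseq k ∈ Set.Icc (0:ℝ) 1)
    (hθ0 : θ0 ∈ Set.Icc (0:ℝ) 1) (hconv : Tendsto θseq atTop (nhds θ0)) :
    ∃ (φ : ℕ → ℕ) (Λ : ℕ → Fin m → ℂ) (lam : Fin m → ℂ), StrictMono φ ∧
      (∀ k, qpol n m u τ (pathD n x (θseq k))
         = C ((esymm n m (pathD n x (θseq k)) : ℝ) : ℂ) * ∏ i : Fin m, (X - C (Λ k i))) ∧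
      (qpol n m u τ (pathD n x θ0)
         = C ((esymm n m (pathD n x θ0) : ℝ) : ℂ) * ∏ i : Fin m, (X - C (lam i))) ∧
      (∀ i, Tendsto (fun k => Λ (φ k) i) atTop (nhds (lam i))) := by
  have hlead : ∀ θ, θ ∈ Set.Icc (0:ℝ) 1 → 0 < esymm n m (pathD n x θ) :=
    fun θ hθ => path_esymm_pos hmn x hx hθ m hm1 le_rfl
  have hΛex : ∀ k, ∃ Λk : Fin m → ℂ, qpol n m u τ (pathD n x (θseq k))
      = C ((esymm n m (pathD n x (θseq k)) : ℝ) : ℂ) * ∏ i : Fin m, (X - C (Λk i)) := by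
    intro k
    apply exists_rootVec (qpol_natDegree_le _ _ _ _) (qpol_coeff_top _ _ _ _)
    exact_mod_cast (hlead _ (hmem k)).ne'
  choose Λ hΛ using hΛex
  have hcoeff : ∀ j, Tendsto
      (fun k => (C (((esymm n m (pathD n x (θseq k)) : ℝ) : ℂ))
        * ∏ i : Fin m, (X - C (Λ k i))).coeff j)
      atTop (nhds ((qpol n m u τ (pathD n x θ0)).coeff j)) := by
    intro j
    have := fun k => (hΛ k).symm
    simp only [fun k => (hΛ k).symm]
    unfold qpol
    apply tendsto_pol_coeff
    · intro i
      exact tendsto_const_nhds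
    · intro i
      exact (Complex.continuous_ofReal.tendsto _).comp (tendsto_pathD x θseq θ0 hconv i)
  have hcc : Tendsto (fun k => ((esymm n m (pathD n x (θseq k)) : ℝ) : ℂ)) atTop
      (nhds ((esymm n m (pathD n x θ0) : ℝ) : ℂ)) := by
    apply (Complex.continuous_ofReal.tendsto _).comp
    exact tendsto_esymm_real _ _ (fun i => tendsto_pathD x θseq θ0 hconv i)
  obtain ⟨φ, lam, hφ, hfact, hlim⟩ := roots_subseq hm1 _ Λ _
    (by exact_mod_cast (hlead _ hθ0).ne') (qpol n m u τ (pathD n x θ0))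
    (qpol_natDegree_le _ _ _ _) (qpol_coeff_top _ _ _ _) hcc hcoeff
  exact ⟨φ, Λ, lam, hφ, hΛ, hfact, hlim⟩

end Path

section Gamma

/-- The first homotopy step: for `x` in the cone, all roots of `s ↦ S_m(u + iτ·1 + s x)`
have negative imaginary part (`τ > 0`). -/
lemma gamma_step {m : ℕ} (hm1 : 1 ≤ m) (hmn : m ≤ n) (x : Fin n → ℝ)
    (hx : ∀ l, 1 ≤ l → l ≤ m → 0 < esymm n l x) (u : Fin n → ℝ) {τ : ℝ} (hτ : 0 < τ) :
    ∀ z ∈ (qpol n m u τ x).roots, z.im < 0 := by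
  have hlead : ∀ θ, θ ∈ Set.Icc (0:ℝ) 1 →
      (((esymm n m (pathD n x θ) : ℝ) : ℂ)) ≠ 0 := by
    intro θ hθ
    exact_mod_cast (path_esymm_pos hmn x hx hθ m hm1 le_rfl).ne'
  set S : Set ℝ := {θ | θ ∈ Set.Icc (0:ℝ) 1
    ∧ ∃ z ∈ (qpol n m u τ (pathD n x θ)).roots, 0 ≤ z.im} with hSdef
  have hSempty : S = ∅ := by
    by_contra hne
    have hSne : S.Nonempty := Set.nonempty_iff_ne_empty.mpr hne
    have hbdd : BddBelow S := ⟨0, fun θ hθ => hθ.1.1⟩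
    set θb := sInf S with hθbdef
    have hθbIcc : θb ∈ Set.Icc (0:ℝ) 1 := by
      obtain ⟨θ1, hθ1⟩ := hSne
      exact ⟨le_csInf ⟨θ1, hθ1⟩ (fun θ hθ => hθ.1.1), le_trans (csInf_le hbdd hθ1) hθ1.1.2⟩
    -- Step A : θb ∈ S
    have hθbS : θb ∈ S := by
      have hseq : ∀ k : ℕ, ∃ θ, θ ∈ S ∧ θ < θb + 1/((k:ℝ)+1) := by
        intro k
        have hpos : 0 < 1/((k:ℝ)+1) := by positivity
        obtain ⟨θ, hθ, hlt⟩ := Real.lt_sInf_add_pos hSne hpos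
        exact ⟨θ, hθ, hlt⟩
      choose θseq hθseqS hθseqlt using hseq
      have hge : ∀ k, θb ≤ θseq k := fun k => csInf_le hbdd (hθseqS k)
      have hconv : Tendsto θseq atTop (nhds θb) := by
        have hup : Tendsto (fun k : ℕ => θb + 1/((k:ℝ)+1)) atTop (nhds θb) := by
          have h0 : Tendsto (fun k : ℕ => 1/((k:ℝ)+1)) atTop (nhds 0) :=
            tendsto_one_div_add_atTop_nhds_zero_nat
          simpa using tendsto_const_nhds.add h0
        exact tendsto_of_tendsto_of_tendsto_of_le_of_le tendsto_const_nhds hup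
          hge (fun k => le_of_lt (hθseqlt k))
      obtain ⟨φ, Λ, lam, hφ, hfactk, hfact0, hlim⟩ :=
        qpol_limit hm1 hmn u x hx τ θseq θb (fun k => (hθseqS k).1) hθbIcc hconv
      have hbadidx : ∀ k, ∃ i, 0 ≤ (Λ k i).im := by
        intro k
        obtain ⟨z, hz, him⟩ := (hθseqS k).2
        obtain ⟨i, rfl⟩ := root_eq_coord (hfactk k) (hlead _ (hθseqS k).1) hz
        exact ⟨i, him⟩
      choose b hb using hbadidx
      obtain ⟨i0, ψ, hψ, hψi⟩ := exists_const_index_subseq (fun k => b (φ k))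
      have hlim0 : Tendsto (fun k => (Λ (φ (ψ k)) i0).im) atTop (nhds ((lam i0).im)) :=
        (Complex.continuous_im.tendsto _).comp ((hlim i0).comp hψ.tendsto_atTop)
      have him0 : 0 ≤ (lam i0).im := by
        apply ge_of_tendsto' hlim0
        intro k
        have := hb (φ (ψ k))
        rwa [hψi k] at this
      exact ⟨hθbIcc, lam i0, coord_mem_roots hfact0 (hlead _ hθbIcc) i0, him0⟩
    -- Step B : 0 ∉ S
    have h0S : (0:ℝ) ∉ S := by
      rintro ⟨_, z, hz, him⟩
      rw [pathD_zero] at hz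
      have hzim := qpol_one_roots hm1 hmn u τ ((mem_roots'.mp hz).2)
      linarith
    have hθbpos : 0 < θb := by
      rcases lt_or_eq_of_le hθbIcc.1 with h | h
      · exact h
      · exact absurd (h ▸ hθbS) h0S
    -- Step C : approach θb from the left through good points
    set θseq2 : ℕ → ℝ := fun k => θb * (1 - 1/((k:ℝ)+2)) with hθseq2def
    have hfrac : ∀ k : ℕ, 0 < 1/((k:ℝ)+2) ∧ 1/((k:ℝ)+2) ≤ 1/2 := by
      intro k
      constructor
      · positivity
      · rw [div_le_div_iff₀ (by positivity) (by norm_num)]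
        push_cast
        linarith [Nat.cast_nonneg (α := ℝ) k]
    have hlt2 : ∀ k, θseq2 k < θb := by
      intro k
      rw [hθseq2def]
      have h1 := (hfrac k).1
      nlinarith [hθbpos]
    have hIcc2 : ∀ k, θseq2 k ∈ Set.Icc (0:ℝ) 1 := by
      intro k
      have h1 := (hfrac k).1
      have h2 := (hfrac k).2
      constructor
      · rw [hθseq2def]
        have : (0:ℝ) ≤ 1 - 1/((k:ℝ)+2) := by linarith
        positivity
      · exact le_trans (le_of_lt (hlt2 k)) hθbIcc.2
    have hnotS : ∀ k, θseq2 k ∉ S := by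
      intro k hk
      exact absurd (csInf_le hbdd hk) (not_le.mpr (hlt2 k))
    have hgood : ∀ k, ∀ z ∈ (qpol n m u τ (pathD n x (θseq2 k))).roots, z.im < 0 := by
      intro k z hz
      by_contra hc
      push_neg at hc
      exact hnotS k ⟨hIcc2 k, z, hz, hc⟩
    have hconv2 : Tendsto θseq2 atTop (nhds θb) := by
      rw [hθseq2def]
      have h2 : Tendsto (fun k : ℕ => ((k:ℝ)+2)) atTop atTop :=
        Filter.tendsto_atTop_add_const_right _ _ tendsto_natCast_atTop_atTop
      have h3 : Tendsto (fun k : ℕ => ((k:ℝ)+2)⁻¹) atTop (nhds 0) :=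
        h2.inv_tendsto_atTop
      have h4 : Tendsto (fun k : ℕ => θb * (1 - 1/((k:ℝ)+2))) atTop (nhds (θb * (1 - 0))) := by
        apply Filter.Tendsto.const_mul
        apply Filter.Tendsto.const_sub
        simpa [one_div] using h3
      simpa using h4
    obtain ⟨φ2, Λ2, lam2, hφ2, hfactk2, hfact02, hlim2⟩ :=
      qpol_limit hm1 hmn u x hx τ θseq2 θb hIcc2 hθbIcc hconv2
    -- all coordinates of lam2 have im < 0
    have hlam2 : ∀ i, (lam2 i).im < 0 := by
      intro i
      have hle : (lam2 i).im ≤ 0 := by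
        apply le_of_tendsto' ((Complex.continuous_im.tendsto _).comp (hlim2 i))
        intro k
        apply le_of_lt
        exact hgood (φ2 k) _ (coord_mem_roots (hfactk2 (φ2 k)) (hlead _ (hIcc2 (φ2 k))) i)
      rcases lt_or_eq_of_le hle with h | h
      · exact h
      · exfalso
        have hroot := coord_mem_roots hfact02 (hlead _ hθbIcc) i
        have := qpol_no_real_root hm1 hmn u (ne_of_gt hτ) (pathD n x θb) h
        exact this ((mem_roots'.mp hroot).2)
    obtain ⟨_, z, hz, him⟩ := hθbS
    obtain ⟨i, rfl⟩ := root_eq_coord hfact02 (hlead _ hθbIcc) hz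
    exact absurd him (not_le.mpr (hlam2 i))
  -- conclude at θ = 1
  intro z hz
  by_contra hc
  push_neg at hc
  have h1S : (1:ℝ) ∈ S := by
    refine ⟨by norm_num, z, ?_, hc⟩
    rwa [pathD_one]
  rw [hSempty] at h1S
  exact h1S

end Gamma

section Hyperbolic

/-- Hyperbolicity in direction `x` : for any real base point `u`, the polynomial
`s ↦ S_m(u + s x)` factors with real roots. -/
lemma hyperbolic_dir {m : ℕ} (hm1 : 1 ≤ m) (hmn : m ≤ n) (x : Fin n → ℝ)
    (hx : ∀ l, 1 ≤ l → l ≤ m → 0 < esymm n l x) (u : Fin n → ℝ) :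
    ∃ lam : Fin m → ℝ, pol ℝ m u x = C (esymm n m x) * ∏ i : Fin m, (X - C (lam i)) := by
  have hc0 : ((esymm n m x : ℝ) : ℂ) ≠ 0 := by
    exact_mod_cast (hx m hm1 le_rfl).ne'
  set τ : ℕ → ℝ := fun k => 1/((k:ℝ)+1) with hτdef
  have hτpos : ∀ k, 0 < τ k := by intro k; positivity
  have hΛex : ∀ k, ∃ Λk : Fin m → ℂ, qpol n m u (τ k) x
      = C ((esymm n m x : ℝ) : ℂ) * ∏ i : Fin m, (X - C (Λk i)) := by
    intro k
    exact exists_rootVec (qpol_natDegree_le _ _ _ _) (qpol_coeff_top _ _ _ _) hc0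
  choose Λ hΛ using hΛex
  set Q : ℂ[X] := (pol ℝ m u x).map (algebraMap ℝ ℂ) with hQdef
  have hQpol : Q = pol ℂ m (fun i => ((u i : ℝ) : ℂ)) (fun i => ((x i : ℝ) : ℂ)) := by
    rw [hQdef, pol_map]
    rfl
  have hQdeg : Q.natDegree ≤ m := le_trans natDegree_map_le (pol_natDegree_le _ _ _)
  have hQctop : Q.coeff m = ((esymm n m x : ℝ) : ℂ) := by
    rw [hQdef, coeff_map, pol_coeff_top, esymA_real]
    rfl
  have hcoeff : ∀ j, Tendsto (fun k => (C ((esymm n m x : ℝ) : ℂ)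
      * ∏ i : Fin m, (X - C (Λ k i))).coeff j) atTop (nhds (Q.coeff j)) := by
    intro j
    simp only [fun k => (hΛ k).symm]
    rw [hQpol]
    unfold qpol
    apply tendsto_pol_coeff
    · intro i
      have h1 : Tendsto (fun k => ((τ k : ℝ) : ℂ)) atTop (nhds ((0:ℝ):ℂ)) := by
        apply (Complex.continuous_ofReal.tendsto _).comp
        rw [hτdef]
        exact tendsto_one_div_add_atTop_nhds_zero_nat
      have h2 : Tendsto (fun k => ((u i : ℝ) : ℂ) + (τ k : ℂ) * Complex.I) atTop
          (nhds (((u i : ℝ) : ℂ) + ((0:ℝ):ℂ) * Complex.I)) :=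
        tendsto_const_nhds.add (h1.mul tendsto_const_nhds)
      simpa using h2
    · intro i
      exact tendsto_const_nhds
  obtain ⟨φ, lam, hφ, hfact, hlim⟩ := roots_subseq hm1 _ Λ _ hc0 Q hQdeg hQctop
    tendsto_const_nhds hcoeff
  -- all roots have im ≤ 0
  have him_le : ∀ i, (lam i).im ≤ 0 := by
    intro i
    apply le_of_tendsto' ((Complex.continuous_im.tendsto _).comp (hlim i))
    intro k
    apply le_of_lt
    apply gamma_step hm1 hmn x hx u (hτpos (φ k))
    exact coord_mem_roots (hΛ (φ k)) hc0 i
  -- conjugation: roots are closed under conjugation, hence all real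
  have hconjroot : ∀ z, Q.IsRoot z → Q.IsRoot ((starRingEnd ℂ) z) := by
    intro z hz
    rw [IsRoot, hQdef] at hz ⊢
    rw [eval_map, ← aeval_def] at hz ⊢
    rw [Polynomial.aeval_conj, hz, map_zero]
  have him0 : ∀ i, (lam i).im = 0 := by
    intro i
    have h1 : Q.IsRoot (lam i) := (mem_roots'.mp (coord_mem_roots hfact hc0 i)).2
    have h2 : Q.IsRoot ((starRingEnd ℂ) (lam i)) := hconjroot _ h1
    have h3 : (starRingEnd ℂ) (lam i) ∈ Q.roots := by
      rw [mem_roots']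
      exact ⟨(mem_roots'.mp (coord_mem_roots hfact hc0 i)).1, h2⟩
    obtain ⟨j, hj⟩ := root_eq_coord hfact hc0 h3
    have h4 : ((starRingEnd ℂ) (lam i)).im ≤ 0 := hj ▸ him_le j
    rw [Complex.conj_im] at h4
    have h6 := him_le i
    linarith
  refine ⟨fun i => (lam i).re, ?_⟩
  have hlamre : ∀ i, lam i = (((lam i).re : ℝ) : ℂ) :=
    fun i => Complex.ext rfl (by simp [him0 i])
  apply Polynomial.map_injective (algebraMap ℝ ℂ) (algebraMap ℝ ℂ).injective
  rw [show Polynomial.map (algebraMap ℝ ℂ) (pol ℝ m u x) = Q from rfl, hfact,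
    Polynomial.map_mul, Polynomial.map_C, Polynomial.map_prod]
  congr 1
  apply Finset.prod_congr rfl
  intro i _
  rw [Polynomial.map_sub, Polynomial.map_C, map_X]
  congr 1
  rw [show (algebraMap ℝ ℂ) ((lam i).re) = (((lam i).re : ℝ) : ℂ) from rfl, ← hlamre i]

end Hyperbolic

section Beta

lemma map_factored {m : ℕ} {p : ℝ[X]} {c : ℝ} {lam : Fin m → ℝ}
    (h : p = C c * ∏ i : Fin m, (X - C (lam i))) :
    p.map (algebraMap ℝ ℂ) = C ((c : ℝ) : ℂ) * ∏ i : Fin m, (X - C (((lam i) : ℝ) : ℂ)) := by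
  rw [h, Polynomial.map_mul, Polynomial.map_C, Polynomial.map_prod]
  congr 1
  apply Finset.prod_congr rfl
  intro i _
  rw [Polynomial.map_sub, Polynomial.map_C, map_X]
  rfl

/-- positivity of `S_m(1 + s x)` for `s ≥ 0`. -/
lemma esymm_one_add_pos {m : ℕ} (hm1 : 1 ≤ m) (hmn : m ≤ n) (x : Fin n → ℝ)
    (hx : ∀ l, 1 ≤ l → l ≤ m → 0 < esymm n l x) {s : ℝ} (hs : 0 ≤ s) :
    0 < esymm n m (fun i => 1 + s * x i) := by
  have hform : (fun i => 1 + s * x i) = fun i => (fun j => s * x j) i + 1 := by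
    funext i; ring
  rw [hform]
  apply esymm_shift_pos hm1 hmn _ one_pos
  intro l hl1 hlm
  rw [esymm_smul]
  have := hx l hl1 hlm
  positivity

/-- The β-step and conclusion: for `x, y` in the cone, `S_m(y + s x) > 0` for all `s ≥ 0`. -/
lemma main_pos {m : ℕ} (hm1 : 1 ≤ m) (hmn : m ≤ n) (x y : Fin n → ℝ)
    (hx : ∀ l, 1 ≤ l → l ≤ m → 0 < esymm n l x)
    (hy : ∀ l, 1 ≤ l → l ≤ m → 0 < esymm n l y) :
    ∀ s : ℝ, 0 ≤ s → 0 < esymm n m (fun i => y i + s * x i) := by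
  have hcx : ((esymm n m x : ℝ) : ℂ) ≠ 0 := by exact_mod_cast (hx m hm1 le_rfl).ne'
  -- the real family along the path from 1 to y, with its real factorization
  set F : ℝ → ℝ[X] := fun θ => pol ℝ m (pathD n y θ) x with hFdef
  have hfactR : ∀ θ : ℝ, ∃ lam : Fin m → ℝ,
      F θ = C (esymm n m x) * ∏ i : Fin m, (X - C (lam i)) := by
    intro θ
    exact hyperbolic_dir hm1 hmn x hx (pathD n y θ)
  -- the complexified family
  set P : ℝ → ℂ[X] := fun θ => (F θ).map (algebraMap ℝ ℂ) with hPdef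
  have hPfact : ∀ θ : ℝ, ∃ lam : Fin m → ℝ,
      P θ = C ((esymm n m x : ℝ) : ℂ) * ∏ i : Fin m, (X - C ((lam i : ℝ) : ℂ)) := by
    intro θ
    obtain ⟨lam, hlam⟩ := hfactR θ
    exact ⟨lam, map_factored hlam⟩
  -- roots of P θ are real, and nonzero for θ ∈ Icc
  have hroots_real : ∀ θ : ℝ, ∀ z ∈ (P θ).roots, z.im = 0 := by
    intro θ z hz
    obtain ⟨lam, hlam⟩ := hPfact θ
    obtain ⟨i, rfl⟩ := root_eq_coord hlam hcx hz
    simp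
  have hF_eval : ∀ θ s : ℝ, (F θ).eval s = esymm n m (fun i => pathD n y θ i + s * x i) := by
    intro θ s
    rw [hFdef]
    rw [pol_eval]
    rfl
  have hroots_ne : ∀ θ, θ ∈ Set.Icc (0:ℝ) 1 → ∀ z ∈ (P θ).roots, z ≠ 0 := by
    intro θ hθ z hz hz0
    have hIs := (mem_roots'.mp hz).2
    rw [hz0, IsRoot, hPdef] at hIs
    have : (F θ).eval 0 = 0 := by
      have := hIs
      rw [eval_map] at this
      rw [show ((0:ℂ)) = algebraMap ℝ ℂ 0 from by simp] at this
      rw [eval₂_at_apply] at this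
      exact_mod_cast this
    rw [hF_eval θ 0] at this
    have hpos : 0 < esymm n m (fun i => pathD n y θ i + 0 * x i) := by
      have hcongr : (fun i => pathD n y θ i + 0 * x i) = pathD n y θ := by
        funext i; ring
      rw [hcongr]
      exact path_esymm_pos hmn y hy hθ m hm1 le_rfl
    rw [this] at hpos
    exact lt_irrefl _ hpos
  -- bad set
  set S : Set ℝ := {θ | θ ∈ Set.Icc (0:ℝ) 1 ∧ ∃ z ∈ (P θ).roots, 0 ≤ z.re} with hSdef
  -- the packaged limit construction for the base path
  have hlimit : ∀ (θseq : ℕ → ℝ) (θ0 : ℝ), (∀ k, θseq k ∈ Set.Icc (0:ℝ) 1) →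
      θ0 ∈ Set.Icc (0:ℝ) 1 → Tendsto θseq atTop (nhds θ0) →
      ∃ (φ : ℕ → ℕ) (Λ : ℕ → Fin m → ℂ) (lam : Fin m → ℂ), StrictMono φ ∧
        (∀ k, P (θseq k) = C ((esymm n m x : ℝ) : ℂ) * ∏ i : Fin m, (X - C (Λ k i))) ∧
        (P θ0 = C ((esymm n m x : ℝ) : ℂ) * ∏ i : Fin m, (X - C (lam i))) ∧
        (∀ i, Tendsto (fun k => Λ (φ k) i) atTop (nhds (lam i))) := by
    intro θseq θ0 hmem hθ0 hconv
    have hΛex : ∀ k, ∃ Λk : Fin m → ℂ,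
        P (θseq k) = C ((esymm n m x : ℝ) : ℂ) * ∏ i : Fin m, (X - C (Λk i)) := by
      intro k
      obtain ⟨lam, hlam⟩ := hPfact (θseq k)
      exact ⟨fun i => ((lam i : ℝ) : ℂ), hlam⟩
    choose Λ hΛ using hΛex
    have hPpol : ∀ θ, P θ = pol ℂ m (fun i => ((pathD n y θ i : ℝ) : ℂ))
        (fun i => ((x i : ℝ) : ℂ)) := by
      intro θ
      show Polynomial.map (algebraMap ℝ ℂ) (pol ℝ m (pathD n y θ) x) = _
      rw [pol_map]
      rfl
    have hPdeg : (P θ0).natDegree ≤ m :=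
      le_trans natDegree_map_le (pol_natDegree_le _ _ _)
    have hPctop : (P θ0).coeff m = ((esymm n m x : ℝ) : ℂ) := by
      rw [hPdef, coeff_map, hFdef, pol_coeff_top, esymA_real]
      rfl
    have hcoeff : ∀ j, Tendsto (fun k => (C ((esymm n m x : ℝ) : ℂ)
        * ∏ i : Fin m, (X - C (Λ k i))).coeff j) atTop (nhds ((P θ0).coeff j)) := by
      intro j
      simp only [fun k => (hΛ k).symm]
      rw [hPpol θ0]
      have : ∀ k, P (θseq k) = pol ℂ m (fun i => ((pathD n y (θseq k) i : ℝ) : ℂ))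
          (fun i => ((x i : ℝ) : ℂ)) := fun k => hPpol (θseq k)
      simp only [this]
      apply tendsto_pol_coeff
      · intro i
        exact (Complex.continuous_ofReal.tendsto _).comp (tendsto_pathD y θseq θ0 hconv i)
      · intro i
        exact tendsto_const_nhds
    obtain ⟨φ, lam, hφ, hfact, hlim⟩ := roots_subseq hm1 _ Λ _ hcx (P θ0)
      hPdeg hPctop tendsto_const_nhds hcoeff
    exact ⟨φ, Λ, lam, hφ, hΛ, hfact, hlim⟩
  -- S is empty
  have hSempty : S = ∅ := by
    by_contra hne
    have hSne : S.Nonempty := Set.nonempty_iff_ne_empty.mpr hne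
    have hbdd : BddBelow S := ⟨0, fun θ hθ => hθ.1.1⟩
    set θb := sInf S with hθbdef
    have hθbIcc : θb ∈ Set.Icc (0:ℝ) 1 := by
      obtain ⟨θ1, hθ1⟩ := hSne
      exact ⟨le_csInf ⟨θ1, hθ1⟩ (fun θ hθ => hθ.1.1), le_trans (csInf_le hbdd hθ1) hθ1.1.2⟩
    -- Step A : θb ∈ S
    have hθbS : θb ∈ S := by
      have hseq : ∀ k : ℕ, ∃ θ, θ ∈ S ∧ θ < θb + 1/((k:ℝ)+1) := by
        intro k
        have hpos : 0 < 1/((k:ℝ)+1) := by positivity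
        obtain ⟨θ, hθ, hlt⟩ := Real.lt_sInf_add_pos hSne hpos
        exact ⟨θ, hθ, hlt⟩
      choose θseq hθseqS hθseqlt using hseq
      have hge : ∀ k, θb ≤ θseq k := fun k => csInf_le hbdd (hθseqS k)
      have hconv : Tendsto θseq atTop (nhds θb) := by
        have hup : Tendsto (fun k : ℕ => θb + 1/((k:ℝ)+1)) atTop (nhds θb) := by
          have h0 : Tendsto (fun k : ℕ => 1/((k:ℝ)+1)) atTop (nhds 0) :=
            tendsto_one_div_add_atTop_nhds_zero_nat
          simpa using tendsto_const_nhds.add h0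
        exact tendsto_of_tendsto_of_tendsto_of_le_of_le tendsto_const_nhds hup
          hge (fun k => le_of_lt (hθseqlt k))
      obtain ⟨φ, Λ, lam, hφ, hfactk, hfact0, hlim⟩ :=
        hlimit θseq θb (fun k => (hθseqS k).1) hθbIcc hconv
      have hbadidx : ∀ k, ∃ i, 0 ≤ (Λ k i).re := by
        intro k
        obtain ⟨z, hz, hre⟩ := (hθseqS k).2
        obtain ⟨i, rfl⟩ := root_eq_coord (hfactk k) hcx hz
        exact ⟨i, hre⟩
      choose b hb using hbadidx
      obtain ⟨i0, ψ, hψ, hψi⟩ := exists_const_index_subseq (fun k => b (φ k))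
      have hlim0 : Tendsto (fun k => (Λ (φ (ψ k)) i0).re) atTop (nhds ((lam i0).re)) :=
        (Complex.continuous_re.tendsto _).comp ((hlim i0).comp hψ.tendsto_atTop)
      have hre0 : 0 ≤ (lam i0).re := by
        apply ge_of_tendsto' hlim0
        intro k
        have := hb (φ (ψ k))
        rwa [hψi k] at this
      exact ⟨hθbIcc, lam i0, coord_mem_roots hfact0 hcx i0, hre0⟩
    -- Step B : 0 ∉ S
    have h0S : (0:ℝ) ∉ S := by
      rintro ⟨hIcc, z, hz, hre⟩
      obtain ⟨lam, hlam⟩ := hfactR 0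
      obtain ⟨i, rfl⟩ := root_eq_coord (map_factored hlam) hcx hz
      -- lam i is a real root with lam i ≥ 0
      have hre2 : 0 ≤ lam i := by simpa using hre
      have hroot : (F 0).eval (lam i) = 0 := by
        rw [hlam, eval_mul, eval_C, eval_prod]
        apply mul_eq_zero_of_right
        apply Finset.prod_eq_zero (Finset.mem_univ i)
        simp
      rw [hF_eval 0 (lam i)] at hroot
      have hpos : 0 < esymm n m (fun j => pathD n y 0 j + (lam i) * x j) := by
        have hcongr : (fun j => pathD n y 0 j + (lam i) * x j)
            = fun j => 1 + (lam i) * x j := by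
          funext j
          rw [pathD_zero]
        rw [hcongr]
        exact esymm_one_add_pos hm1 hmn x hx hre2
      rw [hroot] at hpos
      exact lt_irrefl _ hpos
    have hθbpos : 0 < θb := by
      rcases lt_or_eq_of_le hθbIcc.1 with h | h
      · exact h
      · exact absurd (h ▸ hθbS) h0S
    -- Step C : approach θb from the left through good points
    set θseq2 : ℕ → ℝ := fun k => θb * (1 - 1/((k:ℝ)+2)) with hθseq2def
    have hfrac : ∀ k : ℕ, 0 < 1/((k:ℝ)+2) ∧ 1/((k:ℝ)+2) ≤ 1/2 := by
      intro k
      constructor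
      · positivity
      · rw [div_le_div_iff₀ (by positivity) (by norm_num)]
        linarith [Nat.cast_nonneg (α := ℝ) k]
    have hlt2 : ∀ k, θseq2 k < θb := by
      intro k
      rw [hθseq2def]
      have h1 := (hfrac k).1
      nlinarith [hθbpos]
    have hIcc2 : ∀ k, θseq2 k ∈ Set.Icc (0:ℝ) 1 := by
      intro k
      have h1 := (hfrac k).1
      have h2 := (hfrac k).2
      constructor
      · rw [hθseq2def]
        have : (0:ℝ) ≤ 1 - 1/((k:ℝ)+2) := by linarith
        positivity
      · exact le_trans (le_of_lt (hlt2 k)) hθbIcc.2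
    have hnotS : ∀ k, θseq2 k ∉ S := by
      intro k hk
      exact absurd (csInf_le hbdd hk) (not_le.mpr (hlt2 k))
    have hgood : ∀ k, ∀ z ∈ (P (θseq2 k)).roots, z.re < 0 := by
      intro k z hz
      by_contra hc
      push_neg at hc
      exact hnotS k ⟨hIcc2 k, z, hz, hc⟩
    have hconv2 : Tendsto θseq2 atTop (nhds θb) := by
      rw [hθseq2def]
      have h2 : Tendsto (fun k : ℕ => ((k:ℝ)+2)) atTop atTop :=
        Filter.tendsto_atTop_add_const_right _ _ tendsto_natCast_atTop_atTop
      have h3 : Tendsto (fun k : ℕ => ((k:ℝ)+2)⁻¹) atTop (nhds 0) :=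
        h2.inv_tendsto_atTop
      have h4 : Tendsto (fun k : ℕ => θb * (1 - 1/((k:ℝ)+2))) atTop
          (nhds (θb * (1 - 0))) := by
        apply Filter.Tendsto.const_mul
        apply Filter.Tendsto.const_sub
        simpa [one_div] using h3
      simpa using h4
    obtain ⟨φ2, Λ2, lam2, hφ2, hfactk2, hfact02, hlim2⟩ :=
      hlimit θseq2 θb hIcc2 hθbIcc hconv2
    have hlam2 : ∀ i, (lam2 i).re < 0 := by
      intro i
      have hle : (lam2 i).re ≤ 0 := by
        apply le_of_tendsto' ((Complex.continuous_re.tendsto _).comp (hlim2 i))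
        intro k
        apply le_of_lt
        exact hgood (φ2 k) _ (coord_mem_roots (hfactk2 (φ2 k)) hcx i)
      rcases lt_or_eq_of_le hle with h | h
      · exact h
      · exfalso
        have hmem := coord_mem_roots hfact02 hcx i
        have hne := hroots_ne θb hθbIcc _ hmem
        have him := hroots_real θb _ hmem
        apply hne
        apply Complex.ext
        · simpa using h
        · simpa using him
    obtain ⟨_, z, hz, hre⟩ := hθbS
    obtain ⟨i, rfl⟩ := root_eq_coord hfact02 hcx hz
    exact absurd hre (not_le.mpr (hlam2 i))
  -- conclusion at θ = 1
  intro s hs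
  obtain ⟨lam, hlam⟩ := hfactR 1
  have hlamneg : ∀ i, lam i < 0 := by
    intro i
    have hmem : ((lam i : ℝ) : ℂ) ∈ (P 1).roots :=
      coord_mem_roots (map_factored hlam) hcx i
    have h1S : (1:ℝ) ∉ S := by
      rw [hSempty]
      exact Set.notMem_empty 1
    by_contra hc
    push_neg at hc
    apply h1S
    refine ⟨by norm_num, ((lam i : ℝ) : ℂ), hmem, by simpa using hc⟩
  have heval : esymm n m (fun i => y i + s * x i)
      = esymm n m x * ∏ i : Fin m, (s - lam i) := by
    have h1 := hF_eval 1 s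
    rw [hlam, eval_mul, eval_C, eval_prod] at h1
    have h2 : (fun i => pathD n y 1 i + s * x i) = fun i => y i + s * x i := by
      funext i
      rw [pathD_one]
    rw [h2] at h1
    rw [← h1]
    congr 1
    apply Finset.prod_congr rfl
    intro i _
    rw [eval_sub, eval_X, eval_C]
  rw [heval]
  have hxpos := hx m hm1 le_rfl
  have hprod : 0 < ∏ i : Fin m, (s - lam i) := by
    apply Finset.prod_pos
    intro i _
    have := hlamneg i
    linarith
  positivity

end Beta

end GardingAux

/-- For every `n ≥ 1` and `1 ≤ r ≤ n`, the Gårding cone `Γ_r` is convex: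
if `λ, μ ∈ Γ_r` and `t ∈ [0,1]`, then `tλ + (1−t)μ ∈ Γ_r`. -/
theorem gardingCone_convex (n r : ℕ) (hn : 1 ≤ n) (hr1 : 1 ≤ r) (hrn : r ≤ n) :
    ∀ x ∈ gardingCone n r, ∀ y ∈ gardingCone n r, ∀ t : ℝ, t ∈ Set.Icc (0 : ℝ) 1 →
      t • x + (1 - t) • y ∈ gardingCone n r := by
  intro x hx y hy t ht
  intro j hj1 hjr
  have hjn : j ≤ n := le_trans hjr hrn
  rcases eq_or_lt_of_le ht.1 with h0 | h0
  · have heq : t • x + (1 - t) • y = y := by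
      rw [← h0]
      funext i
      simp
    rw [heq]
    exact hy j hj1 hjr
  rcases eq_or_lt_of_le ht.2 with h1 | h1
  · have heq : t • x + (1 - t) • y = x := by
      rw [h1]
      funext i
      simp
    rw [heq]
    exact hx j hj1 hjr
  have h1t : 0 < 1 - t := by linarith
  have hxj : ∀ l, 1 ≤ l → l ≤ j → 0 < esymm n l x :=
    fun l hl1 hl2 => hx l hl1 (le_trans hl2 hjr)
  have hyj : ∀ l, 1 ≤ l → l ≤ j → 0 < esymm n l y :=
    fun l hl1 hl2 => hy l hl1 (le_trans hl2 hjr)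
  have hs : 0 ≤ t / (1 - t) := by positivity
  have key := GardingAux.main_pos hj1 hjn x y hxj hyj (t / (1 - t)) hs
  have hz : (t • x + (1 - t) • y)
      = fun i => (1 - t) * ((fun i' => y i' + (t / (1 - t)) * x i') i) := by
    funext i
    simp only [Pi.add_apply, Pi.smul_apply, smul_eq_mul]
    field_simp
    ring
  rw [hz, GardingAux.esymm_smul]
  positivity
end

section
/- Let n ≥ 2 and 1 ≤ r ≤ n. For every λ ∈ Γ_r and every index i ∈ {1,…,n}, the partial derivative of S_r with respect to λ_i is strictly positive at λ; equivalently, S_{r−1}((λ_j)_{j ≠ i}) > 0, where S_{r−1} is the (r−1)-st elementary symmetric function of the n−1 remaining entries (with the convention S_0 = 1). In particular, S_r is strictly increasing in each variable on Γ_r. -/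
set_option linter.unusedSectionVars false

namespace EsymmAux

variable {ι : Type*} [DecidableEq ι]

/-- Elementary symmetric function over a finite index set `A`. -/
def E (x : ι → ℝ) (k : ℕ) (A : Finset ι) : ℝ :=
  ∑ s ∈ Finset.powersetCard k A, ∏ j ∈ s, x j

lemma E_zero (x : ι → ℝ) (A : Finset ι) : E x 0 A = 1 := by
  simp [E, Finset.powersetCard_zero]

lemma E_of_card_lt (x : ι → ℝ) {k : ℕ} {A : Finset ι} (h : A.card < k) : E x k A = 0 := by
  rw [E, Finset.powersetCard_eq_empty.2 h, Finset.sum_empty]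

lemma E_one (x : ι → ℝ) (A : Finset ι) : E x 1 A = ∑ p ∈ A, x p := by
  rw [E, Finset.powersetCard_one, Finset.sum_map]
  simp

lemma sum_split (F : Finset ι → ℝ) {A : Finset ι} {i : ι} (hi : i ∈ A) (k : ℕ) :
    ∑ s ∈ Finset.powersetCard (k + 1) A, F s
      = ∑ s ∈ Finset.powersetCard (k + 1) (A.erase i), F s
        + ∑ t ∈ Finset.powersetCard k (A.erase i), F (insert i t) := by
  conv_lhs => rw [← Finset.insert_erase hi]
  rw [Finset.powersetCard_succ_insert (Finset.notMem_erase i A),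
    Finset.sum_union ?disj, Finset.sum_image ?inj]
  case inj =>
    intro t ht t' ht' hins
    have hti : i ∉ t := fun h =>
      Finset.notMem_erase i A ((Finset.mem_powersetCard.1 ht).1 h)
    have hti' : i ∉ t' := fun h =>
      Finset.notMem_erase i A ((Finset.mem_powersetCard.1 ht').1 h)
    have h2 : (insert i t).erase i = (insert i t').erase i := by rw [hins]
    rwa [Finset.erase_insert hti, Finset.erase_insert hti'] at h2
  case disj =>
    rw [Finset.disjoint_left]
    intro s hs hs'
    obtain ⟨t, _, rfl⟩ := Finset.mem_image.1 hs'
    exact Finset.notMem_erase i A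
      ((Finset.mem_powersetCard.1 hs).1 (Finset.mem_insert_self i t))

lemma E_rec (x : ι → ℝ) {A : Finset ι} {i : ι} (hi : i ∈ A) (k : ℕ) :
    E x (k + 1) A = E x (k + 1) (A.erase i) + x i * E x k (A.erase i) := by
  rw [E, sum_split (fun s => ∏ j ∈ s, x j) hi k]
  congr 1
  rw [E, Finset.mul_sum]
  refine Finset.sum_congr rfl fun t ht => ?_
  have hti : i ∉ t := fun h =>
    Finset.notMem_erase i A ((Finset.mem_powersetCard.1 ht).1 h)
  rw [Finset.prod_insert hti]

/-- The Gårding cone over an index set. -/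
def Gam (x : ι → ℝ) (k : ℕ) (A : Finset ι) : Prop :=
  ∀ j : ℕ, 1 ≤ j → j ≤ k → 0 < E x j A

lemma E_pos_of_pos {x : ι → ℝ} {A : Finset ι} {k : ℕ} (h : ∀ p ∈ A, 0 < x p)
    (hk : k ≤ A.card) : 0 < E x k A :=
  Finset.sum_pos
    (fun s hs => Finset.prod_pos fun j hj => h j ((Finset.mem_powersetCard.1 hs).1 hj))
    (Finset.powersetCard_nonempty.2 hk)

lemma L1 {x : ι → ℝ} {k : ℕ} {A : Finset ι} {m : ι} (hm : m ∈ A) (hxm : x m ≤ 0)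
    (hG : Gam x k A) :
    ∀ j, j ≤ k → 0 < E x j (A.erase m) ∧ E x j A ≤ E x j (A.erase m) := by
  intro j
  induction j with
  | zero => intro _; rw [E_zero, E_zero]; norm_num
  | succ j ih =>
    intro hj
    have hj' := ih (by omega)
    have hrec := E_rec x hm j
    have h1 : 0 < E x (j + 1) A := hG (j + 1) (by omega) hj
    have hmul : x m * E x j (A.erase m) ≤ 0 :=
      mul_nonpos_of_nonpos_of_nonneg hxm (hj'.1).le
    have hle : E x (j + 1) A ≤ E x (j + 1) (A.erase m) := by linarith
    exact ⟨lt_of_lt_of_le h1 hle, hle⟩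

lemma Gam_erase {x : ι → ℝ} {k : ℕ} {A : Finset ι} {m : ι} (hm : m ∈ A) (hxm : x m ≤ 0)
    (hG : Gam x k A) : Gam x k (A.erase m) :=
  fun j h1 h2 => (L1 hm hxm hG j h2).1

lemma sq_lemma (x : ι → ℝ) (A : Finset ι) : 2 * E x 2 A ≤ (E x 1 A) ^ 2 := by
  classical
  induction A using Finset.induction_on with
  | empty =>
    rw [E_of_card_lt x (by simp), E_of_card_lt x (by simp)]
    norm_num
  | @insert a A ha ih =>
    have h1 : E x 1 (insert a A) = E x 1 A + x a * E x 0 A := by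
      have h := E_rec x (Finset.mem_insert_self a A) 0
      rwa [Finset.erase_insert ha] at h
    have h2 : E x 2 (insert a A) = E x 2 A + x a * E x 1 A := by
      have h := E_rec x (Finset.mem_insert_self a A) 1
      rwa [Finset.erase_insert ha] at h
    rw [h1, h2, E_zero]
    nlinarith [ih, sq_nonneg (x a)]


theorem PQ (x : ι → ℝ) : ∀ N : ℕ,
    (∀ A : Finset ι, A.card = N → ∀ k, 1 ≤ k → k ≤ N → Gam x k A →
      ∀ i ∈ A, 0 < E x (k - 1) (A.erase i))
    ∧ (∀ A : Finset ι, A.card = N → ∀ k, Gam x (k + 2) A →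
      E x (k + 2) A * E x k A ≤ (E x (k + 1) A) ^ 2) := by
  intro N
  induction N using Nat.strong_induction_on with
  | _ N IH =>
  have hP : ∀ A : Finset ι, A.card = N → ∀ k, 1 ≤ k → k ≤ N → Gam x k A →
      ∀ i ∈ A, 0 < E x (k - 1) (A.erase i) := by
    intro A hA k hk1 hkN hG i hi
    obtain ⟨k', rfl⟩ : ∃ k', k = k' + 1 := ⟨k - 1, by omega⟩
    simp only [Nat.add_sub_cancel]
    rcases Nat.eq_zero_or_pos k' with rfl | hk'
    · rw [E_zero]; norm_num
    by_cases hall : ∀ p ∈ A, 0 < x p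
    · exact E_pos_of_pos (fun p hp => hall p (Finset.mem_of_mem_erase hp))
        (by rw [Finset.card_erase_of_mem hi, hA]; omega)
    push_neg at hall
    obtain ⟨m, hmA, hxm⟩ := hall
    by_cases hmi : m = i
    · subst hmi; exact (L1 hmA hxm hG k' (by omega)).1
    -- hard case
    have hkN' : k' + 1 < N := by
      by_contra h
      have h0 := (L1 hmA hxm hG (k' + 1) le_rfl).1
      rw [E_of_card_lt x (by rw [Finset.card_erase_of_mem hmA, hA]; omega)] at h0
      exact lt_irrefl _ h0
    have hG' : Gam x (k' + 1) (A.erase m) := Gam_erase hmA hxm hG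
    have hiA' : i ∈ A.erase m := Finset.mem_erase.2 ⟨fun h => hmi h.symm, hi⟩
    have hcard' : (A.erase m).card = N - 1 := by
      rw [Finset.card_erase_of_mem hmA, hA]
    have hb : ∀ j, j ≤ k' → 0 < E x j ((A.erase m).erase i) := by
      intro j hj
      have h := (IH (N - 1) (by omega)).1 (A.erase m) hcard' (j + 1) (by omega)
        (by omega) (fun l h1 h2 => hG' l h1 (by omega)) i hiA'
      simpa using h
    obtain ⟨k'', rfl⟩ : ∃ k'', k' = k'' + 1 := ⟨k' - 1, by omega⟩
    have hb0 : 0 < E x k'' ((A.erase m).erase i) := hb k'' (by omega)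
    have hb1 : 0 < E x (k'' + 1) ((A.erase m).erase i) := hb (k'' + 1) le_rfl
    have hmAi : m ∈ A.erase i := Finset.mem_erase.2 ⟨hmi, hmA⟩
    have hcomm : (A.erase i).erase m = (A.erase m).erase i := Finset.erase_right_comm
    have hrec1 : E x (k'' + 1) (A.erase i)
        = E x (k'' + 1) ((A.erase m).erase i) + x m * E x k'' ((A.erase m).erase i) := by
      have h := E_rec x hmAi k''
      rwa [hcomm] at h
    rw [hrec1]
    by_contra hcon
    push_neg at hcon
    -- expansions of E x (k''+2) A
    have hek : 0 < E x (k'' + 2) A := hG (k'' + 2) (by omega) le_rfl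
    have e1 : E x (k'' + 2) A
        = E x (k'' + 2) (A.erase m) + x m * E x (k'' + 1) (A.erase m) :=
      E_rec x hmA (k'' + 1)
    have e2 : E x (k'' + 2) (A.erase m)
        = E x (k'' + 2) ((A.erase m).erase i) + x i * E x (k'' + 1) ((A.erase m).erase i) :=
      E_rec x hiA' (k'' + 1)
    have e3 : E x (k'' + 1) (A.erase m)
        = E x (k'' + 1) ((A.erase m).erase i) + x i * E x k'' ((A.erase m).erase i) :=
      E_rec x hiA' k''
    have hEA' : 0 < E x (k'' + 1) (A.erase m) := hG' (k'' + 1) (by omega) (by omega)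
    set b0 := E x k'' ((A.erase m).erase i)
    set b1 := E x (k'' + 1) ((A.erase m).erase i)
    set b2 := E x (k'' + 2) ((A.erase m).erase i)
    have hEA'3 : 0 < b1 + x i * b0 := by rw [e3] at hEA'; exact hEA'
    have hek' : 0 < b2 + x i * b1 + x m * (b1 + x i * b0) := by
      rw [e1, e2, e3] at hek; linarith
    have key : b1 ^ 2 < b2 * b0 := by
      nlinarith [mul_pos hek' hb0, mul_nonneg (by linarith : (0:ℝ) ≤ -(b1 + x m * b0)) hEA'3.le]
    have hb2 : 0 < b2 := by
      by_contra h
      push_neg at h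
      nlinarith [pow_pos hb1 2, mul_nonpos_of_nonpos_of_nonneg h hb0.le]
    have hGB : Gam x (k'' + 2) ((A.erase m).erase i) := by
      intro j h1 h2
      by_cases hj : j ≤ k'' + 1
      · exact hb j hj
      · have : j = k'' + 2 := by omega
        rw [this]; exact hb2
    have hcardB : ((A.erase m).erase i).card = N - 2 := by
      rw [Finset.card_erase_of_mem hiA', hcard']; omega
    have hNewton := (IH (N - 2) (by omega)).2 ((A.erase m).erase i) hcardB k'' hGB
    nlinarith [hNewton, key]
  refine ⟨hP, ?_⟩
  intro A hA k hG
  rcases k with _ | k₀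
  · -- k = 0
    rw [E_zero]
    have h2 := hG 2 (by omega) le_rfl
    have hsq := sq_lemma x A
    nlinarith
  · -- k = k₀ + 1
    have hcard : k₀ + 3 ≤ A.card := by
      by_contra h
      have h3 := hG (k₀ + 3) (by omega) le_rfl
      rw [E_of_card_lt x (by omega)] at h3
      linarith
    have hE1 : 0 < E x 1 A := hG 1 (by omega) (by omega)
    have hex : ∃ i ∈ A, 0 < x i := by
      by_contra h
      push_neg at h
      have : E x 1 A ≤ 0 := by rw [E_one]; exact Finset.sum_nonpos h
      linarith
    obtain ⟨i, hiA, hxi⟩ := hex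
    have hd : ∀ j, j ≤ k₀ + 2 → 0 < E x j (A.erase i) := by
      intro j hj
      rcases Nat.eq_zero_or_pos j with rfl | hj0
      · rw [E_zero]; norm_num
      have h := hP A hA (j + 1) (by omega) (by omega)
        (fun l h1 h2 => hG l h1 (by omega)) i hiA
      simpa using h
    have hcard' : (A.erase i).card = N - 1 := by
      rw [Finset.card_erase_of_mem hiA, hA]
    have hN1 : N - 1 < N := by omega
    have hGd : Gam x (k₀ + 2) (A.erase i) := fun j _ h2 => hd j h2
    have hC := (IH (N - 1) hN1).2 (A.erase i) hcard' k₀ hGd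
    set D0 := E x k₀ (A.erase i)
    set D1 := E x (k₀ + 1) (A.erase i)
    set D2 := E x (k₀ + 2) (A.erase i)
    set D3 := E x (k₀ + 3) (A.erase i)
    have hD0 : 0 < D0 := hd k₀ (by omega)
    have hD1 : 0 < D1 := hd (k₀ + 1) (by omega)
    have hD2 : 0 < D2 := hd (k₀ + 2) le_rfl
    have hA' : D3 * D1 ≤ D2 ^ 2 := by
      by_cases h3 : 0 < D3
      · have hGd3 : Gam x (k₀ + 3) (A.erase i) := by
          intro j h1 h2
          by_cases hj : j ≤ k₀ + 2
          · exact hd j hj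
          · have : j = k₀ + 3 := by omega
            rw [this]; exact h3
        exact (IH (N - 1) hN1).2 (A.erase i) hcard' (k₀ + 1) hGd3
      · push_neg at h3
        calc D3 * D1 ≤ 0 := mul_nonpos_of_nonpos_of_nonneg h3 hD1.le
        _ ≤ D2 ^ 2 := sq_nonneg _
    have hB' : D3 * D0 ≤ D2 * D1 := by
      by_cases h3 : 0 < D3
      · have hmm := mul_le_mul hA' hC (mul_nonneg hD2.le hD0.le) (sq_nonneg _)
        nlinarith [mul_pos hD2 hD1]
      · push_neg at h3
        calc D3 * D0 ≤ 0 := mul_nonpos_of_nonpos_of_nonneg h3 hD0.le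
        _ ≤ D2 * D1 := (mul_pos hD2 hD1).le
    have e1 : E x (k₀ + 3) A = D3 + x i * D2 := E_rec x hiA (k₀ + 2)
    have e2 : E x (k₀ + 2) A = D2 + x i * D1 := E_rec x hiA (k₀ + 1)
    have e3 : E x (k₀ + 1) A = D1 + x i * D0 := E_rec x hiA k₀
    rw [e1, e2, e3]
    nlinarith [mul_le_mul_of_nonneg_left hB' hxi.le,
      mul_le_mul_of_nonneg_left hC (mul_pos hxi hxi).le, hA']

end EsymmAux

/-- Let `n ≥ 2` and `1 ≤ r ≤ n`.  For every `λ ∈ Γ_r` and every index `i`, the partial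
derivative of `S_r` with respect to `λ_i` is strictly positive at `λ`; equivalently
`S_{r−1}((λ_j)_{j ≠ i}) > 0`, the `(r−1)`-st elementary symmetric function of the `n−1`
remaining entries (with the convention `S_0 = 1`).  In particular `S_r` is strictly
increasing in the `i`-th variable on `Γ_r`. -/
theorem esymm_partialDeriv_pos (n r : ℕ) (hn : 2 ≤ n) (hr1 : 1 ≤ r) (hrn : r ≤ n)
    (x : Fin n → ℝ) (hx : x ∈ gardingCone n r) (i : Fin n) :
    0 < fderiv ℝ (esymm n r) x (Pi.single i 1) ∧
    0 < ∑ s ∈ Finset.powersetCard (r - 1) (Finset.univ.erase i), ∏ j ∈ s, x j ∧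
    fderiv ℝ (esymm n r) x (Pi.single i 1) =
      ∑ s ∈ Finset.powersetCard (r - 1) (Finset.univ.erase i), ∏ j ∈ s, x j ∧
    StrictMono (fun t : ℝ => esymm n r (Function.update x i t)) := by
  classical
  obtain ⟨r', rfl⟩ : ∃ r', r = r' + 1 := ⟨r - 1, by omega⟩
  have huniv : (Finset.univ : Finset (Fin n)).card = n := Finset.card_fin n
  have hGam : EsymmAux.Gam x (r' + 1) Finset.univ := fun j h1 h2 => hx j h1 h2
  have hB : 0 < EsymmAux.E x r' ((Finset.univ : Finset (Fin n)).erase i) := by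
    have h := (EsymmAux.PQ x n).1 Finset.univ huniv (r' + 1) (by omega) (by omega)
      hGam i (Finset.mem_univ i)
    simpa using h
  -- the derivative of `esymm`
  have hfd : HasFDerivAt (esymm n (r' + 1))
      (∑ s ∈ Finset.powersetCard (r' + 1) (Finset.univ : Finset (Fin n)),
        ∑ j ∈ s, (∏ l ∈ s.erase j, x l) •
          (ContinuousLinearMap.proj j : (Fin n → ℝ) →L[ℝ] ℝ)) x := by
    have h : ∀ s ∈ Finset.powersetCard (r' + 1) (Finset.univ : Finset (Fin n)),
        HasFDerivAt (fun y : Fin n → ℝ => ∏ j ∈ s, y j)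
          (∑ j ∈ s, (∏ l ∈ s.erase j, x l) •
            (ContinuousLinearMap.proj j : (Fin n → ℝ) →L[ℝ] ℝ)) x :=
      fun s _ => hasFDerivAt_finset_prod
    exact HasFDerivAt.fun_sum h
  have hval : fderiv ℝ (esymm n (r' + 1)) x (Pi.single i 1)
      = EsymmAux.E x r' ((Finset.univ : Finset (Fin n)).erase i) := by
    rw [hfd.fderiv, ContinuousLinearMap.sum_apply]
    have hterm : ∀ s : Finset (Fin n),
        (∑ j ∈ s, (∏ l ∈ s.erase j, x l) •
          (ContinuousLinearMap.proj j : (Fin n → ℝ) →L[ℝ] ℝ)) (Pi.single i 1)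
        = if i ∈ s then ∏ l ∈ s.erase i, x l else 0 := by
      intro s
      rw [ContinuousLinearMap.sum_apply]
      simp only [ContinuousLinearMap.smul_apply, ContinuousLinearMap.proj_apply,
        smul_eq_mul, Pi.single_apply]
      rw [Finset.sum_congr rfl (fun j _ => by rw [mul_ite, mul_one, mul_zero])]
      exact Finset.sum_ite_eq' s i (fun j => ∏ l ∈ s.erase j, x l)
    rw [Finset.sum_congr rfl fun s _ => hterm s]
    rw [EsymmAux.sum_split (fun s => if i ∈ s then ∏ l ∈ s.erase i, x l else 0)
      (Finset.mem_univ i) r']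
    have h1 : ∑ s ∈ Finset.powersetCard (r' + 1)
          ((Finset.univ : Finset (Fin n)).erase i),
        (if i ∈ s then ∏ l ∈ s.erase i, x l else 0) = 0 :=
      Finset.sum_eq_zero fun s hs => if_neg fun h =>
        Finset.notMem_erase i _ ((Finset.mem_powersetCard.1 hs).1 h)
    have h2 : ∑ t ∈ Finset.powersetCard r'
          ((Finset.univ : Finset (Fin n)).erase i),
        (if i ∈ insert i t then ∏ l ∈ (insert i t).erase i, x l else 0)
        = EsymmAux.E x r' ((Finset.univ : Finset (Fin n)).erase i) := by
      refine Finset.sum_congr rfl fun t ht => ?_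
      have hti : i ∉ t := fun h =>
        Finset.notMem_erase i _ ((Finset.mem_powersetCard.1 ht).1 h)
      rw [if_pos (Finset.mem_insert_self i t), Finset.erase_insert hti]
    rw [h1, h2, zero_add]
  have hupd : ∀ t : ℝ, esymm n (r' + 1) (Function.update x i t)
      = EsymmAux.E x (r' + 1) ((Finset.univ : Finset (Fin n)).erase i)
        + t * EsymmAux.E x r' ((Finset.univ : Finset (Fin n)).erase i) := by
    intro t
    show (∑ s ∈ Finset.powersetCard (r' + 1) (Finset.univ : Finset (Fin n)),
      ∏ j ∈ s, Function.update x i t j) = _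
    rw [EsymmAux.sum_split (fun s => ∏ j ∈ s, Function.update x i t j)
      (Finset.mem_univ i) r']
    congr 1
    · refine Finset.sum_congr rfl fun s hs => Finset.prod_congr rfl fun j hj => ?_
      exact Function.update_of_ne
        (Finset.mem_erase.1 ((Finset.mem_powersetCard.1 hs).1 hj)).1 t x
    · rw [EsymmAux.E, Finset.mul_sum]
      refine Finset.sum_congr rfl fun s hs => ?_
      have his : i ∉ s := fun h =>
        Finset.notMem_erase i _ ((Finset.mem_powersetCard.1 hs).1 h)
      rw [Finset.prod_insert his, Function.update_self]
      congr 1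
      exact Finset.prod_congr rfl fun j hj => Function.update_of_ne
        (Finset.mem_erase.1 ((Finset.mem_powersetCard.1 hs).1 hj)).1 t x
  refine ⟨?_, ?_, ?_, ?_⟩
  · rw [hval]; exact hB
  · simpa [EsymmAux.E] using hB
  · simp only [Nat.add_sub_cancel]
    rw [hval]
    rfl
  · intro a b hab
    simp only [hupd]
    nlinarith [hB, hab]
end

section
/- Let n ≥ 1 and 1 ≤ r ≤ n. If λ ∈ Γ_r and μ ∈ ℝⁿ satisfies μ_i ≥ λ_i for every i, then μ ∈ Γ_r and S_r(μ) ≥ S_r(λ). -/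
namespace GC
open Multiset Polynomial

open Multiset

lemma esymm_cons (a : ℝ) (s : Multiset ℝ) (k : ℕ) :
    (a ::ₘ s).esymm (k+1) = s.esymm (k+1) + a * s.esymm k := by
  simp only [Multiset.esymm, Multiset.powersetCard_cons, Multiset.map_add, Multiset.sum_add,
    Multiset.map_map, Function.comp_def, Multiset.prod_cons]
  rw [Multiset.sum_map_mul_left]

lemma esymm_of_card_lt {s : Multiset ℝ} {k : ℕ} (h : Multiset.card s < k) : s.esymm k = 0 := by
  simp [Multiset.esymm, Multiset.powersetCard_eq_empty _ h]

lemma esymm_zero' (s : Multiset ℝ) : s.esymm 0 = 1 := by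
  simp [Multiset.esymm]

lemma esymm_one' (s : Multiset ℝ) : s.esymm 1 = s.sum := by
  induction s using Multiset.induction with
  | empty => rw [esymm_of_card_lt (by simp)]; simp
  | cons a s ih => rw [show (1:ℕ) = 0 + 1 from rfl, esymm_cons, esymm_zero'] ; simp [ih]; ring

lemma sq_sum_eq (s : Multiset ℝ) :
    s.sum ^ 2 = (s.map (· ^ 2)).sum + 2 * s.esymm 2 := by
  induction s using Multiset.induction with
  | empty => rw [esymm_of_card_lt (by simp)]; simp
  | cons a s ih =>
    rw [Multiset.sum_cons, show (2:ℕ) = 1 + 1 from rfl, esymm_cons, esymm_one', Multiset.map_cons,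
      Multiset.sum_cons]
    ring_nf
    nlinarith [ih]

lemma two_mul_le (a : ℝ) (s : Multiset ℝ) :
    2 * a * s.sum ≤ (Multiset.card s : ℝ) * a ^ 2 + (s.map (· ^ 2)).sum := by
  induction s using Multiset.induction with
  | empty => simp
  | cons b s ih =>
    rw [Multiset.sum_cons, Multiset.map_cons, Multiset.sum_cons, Multiset.card_cons]
    push_cast
    nlinarith [sq_nonneg (a - b), ih]

lemma lemA_aux (s : Multiset ℝ) :
    2 * s.esymm 2 ≤ ((Multiset.card s : ℝ) - 1) * (s.map (· ^ 2)).sum := by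
  induction s using Multiset.induction with
  | empty => rw [esymm_of_card_lt (by simp)]; simp
  | cons a s ih =>
    rw [show (2:ℕ) = 1 + 1 from rfl, esymm_cons, esymm_one', Multiset.map_cons,
      Multiset.sum_cons, Multiset.card_cons]
    push_cast
    have h2 := two_mul_le a s
    have hc : (0:ℝ) ≤ (Multiset.card s : ℝ) := Nat.cast_nonneg _
    nlinarith [sq_nonneg a]

/-- Newton's inequality, case `k = 1`, unnormalized:
`C(m,2) * e₁² ≥ m² * e₂`. -/
lemma lemA (s : Multiset ℝ) :
    (Multiset.card s : ℝ) ^ 2 * s.esymm 2 ≤ ((Multiset.card s).choose 2 : ℝ) * s.sum ^ 2 := by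
  have h1 := lemA_aux s
  have h2 := sq_sum_eq s
  have hQ : (0:ℝ) ≤ (s.map (· ^ 2)).sum := by
    apply Multiset.sum_nonneg; intro x hx
    obtain ⟨y, _, rfl⟩ := Multiset.mem_map.mp hx; positivity
  have hch : ((Multiset.card s).choose 2 : ℝ) * 2 = (Multiset.card s : ℝ) * ((Multiset.card s : ℝ) - 1) := by
    rcases Nat.eq_zero_or_pos (Multiset.card s) with h | h
    · simp [h]
    · have : (Multiset.card s).choose 2 * 2 = Multiset.card s * (Multiset.card s - 1) := by
        rw [Nat.choose_two_right, Nat.div_mul_cancel (Nat.even_mul_pred_self _).two_dvd]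
      have := congrArg (fun n : ℕ => (n : ℝ)) this
      push_cast [Nat.cast_sub h] at this
      exact this

  have hc : (0:ℝ) ≤ (Multiset.card s : ℝ) := Nat.cast_nonneg _
  nlinarith [hc, h1, h2, hQ]


open Multiset

lemma esymm_card (s : Multiset ℝ) : s.esymm (Multiset.card s) = s.prod := by
  induction s using Multiset.induction with
  | empty => simp [Multiset.esymm]
  | cons a s ih =>
    rw [Multiset.card_cons, esymm_cons, ih, esymm_of_card_lt (Nat.lt_succ_self _),
      Multiset.prod_cons]
    ring

lemma esymm_map_inv (s : Multiset ℝ) (h0 : ∀ x ∈ s, x ≠ 0) :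
    ∀ j, j ≤ Multiset.card s →
      (s.map (·⁻¹)).esymm j * s.prod = s.esymm (Multiset.card s - j) := by
  induction s using Multiset.induction with
  | empty => intro j hj; simp only [Multiset.card_zero, Nat.le_zero] at hj; subst hj; simp [esymm_zero']
  | cons a s ih =>
    intro j hj
    have ha : a ≠ 0 := h0 a (Multiset.mem_cons_self a s)
    have h0' : ∀ x ∈ s, x ≠ 0 := fun x hx => h0 x (Multiset.mem_cons_of_mem hx)
    rw [Multiset.map_cons, Multiset.prod_cons]
    rcases j with _ | j'
    · rw [esymm_zero', one_mul, Nat.sub_zero, Multiset.card_cons, ← Multiset.prod_cons,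
        ← esymm_card (a ::ₘ s), Multiset.card_cons]
    · rw [Multiset.card_cons] at hj ⊢
      rw [esymm_cons]
      rcases Nat.lt_or_ge j' (Multiset.card s) with hlt | hge
      · have h1 : j' + 1 ≤ Multiset.card s := hlt
        have e1 := ih h0' (j'+1) h1
        have e2 := ih h0' j' (Nat.le_of_lt hlt)
        have hsub : Multiset.card s + 1 - (j' + 1) = (Multiset.card s - (j'+1)) + 1 := by omega
        rw [hsub, esymm_cons]
        have hsub2 : Multiset.card s - (j' + 1) + 1 = Multiset.card s - j' := by omega
        calc ((s.map (·⁻¹)).esymm (j'+1) + a⁻¹ * (s.map (·⁻¹)).esymm j') * (a * s.prod)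
            = a * ((s.map (·⁻¹)).esymm (j'+1) * s.prod)
              + (a⁻¹ * a) * ((s.map (·⁻¹)).esymm j' * s.prod) := by ring
          _ = a * s.esymm (Multiset.card s - (j'+1)) + s.esymm (Multiset.card s - j') := by
              rw [e1, e2, inv_mul_cancel₀ ha, one_mul]
          _ = s.esymm (Multiset.card s - (j'+1) + 1) + a * s.esymm (Multiset.card s - (j'+1)) := by
              rw [hsub2]; ring
      · have hj' : j' = Multiset.card s := le_antisymm (by omega) hge
        subst hj'
        have hz : (s.map (·⁻¹)).esymm (Multiset.card s + 1) = 0 :=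
          esymm_of_card_lt (by simp)
        have e2 := ih h0' (Multiset.card s) le_rfl
        rw [hz, Nat.sub_self, esymm_zero']
        calc (0 + a⁻¹ * (s.map (·⁻¹)).esymm (Multiset.card s)) * (a * s.prod)
            = (a⁻¹ * a) * ((s.map (·⁻¹)).esymm (Multiset.card s) * s.prod) := by ring
          _ = 1 := by rw [e2, inv_mul_cancel₀ ha, Nat.sub_self, esymm_zero', one_mul]


open Multiset Polynomial

lemma deriv_esymm (s : Multiset ℝ) (m : ℕ) (hm : Multiset.card s = m) (h2 : 2 ≤ m) :
    ∃ ν : Multiset ℝ, Multiset.card ν = m - 1 ∧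
      ∀ r ≤ m - 1, (m : ℝ) * ν.esymm r = ((m - r : ℕ) : ℝ) * s.esymm r := by
  set f : ℝ[X] := (s.map (fun a => X + C a)).prod with hf
  have hmono : f.Monic :=
    monic_multiset_prod_of_monic s _ (fun a _ => monic_X_add_C a)
  have hdeg : f.natDegree = m := by
    rw [hf, natDegree_multiset_prod_of_monic]
    · simp [Multiset.map_map, Function.comp_def, natDegree_X_add_C, hm]
    · intro p hp
      obtain ⟨a, _, rfl⟩ := Multiset.mem_map.mp hp
      exact monic_X_add_C a
  have hcoeff : ∀ k ≤ m, f.coeff k = s.esymm (m - k) := by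
    intro k hk
    rw [hf, Multiset.prod_X_add_C_coeff s (hm ▸ hk), hm]
  have hroots : f.roots = s.map Neg.neg := by
    have : f = ((s.map Neg.neg).map (fun a => X - C a)).prod := by
      rw [hf, Multiset.map_map]
      congr 1
      apply Multiset.map_congr rfl
      intro a _
      simp [Function.comp, map_neg, sub_neg_eq_add]
    rw [this, roots_multiset_prod_X_sub_C]
  have hrootscard : Multiset.card f.roots = m := by rw [hroots]; simp [hm]
  -- derivative
  set g := derivative f with hg
  have hgc : ∀ k, g.coeff k = f.coeff (k+1) * ((k+1 : ℕ) : ℝ) := fun k => by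
    rw [hg, coeff_derivative]; push_cast; ring
  have hgtop : g.coeff (m-1) = (m : ℝ) := by
    have hfm : f.coeff m = 1 := by
      have := hmono.coeff_natDegree
      rwa [hdeg] at this
    rw [hgc, show m - 1 + 1 = m by omega, hfm, one_mul]
  have hm0 : (m:ℝ) ≠ 0 := by positivity
  have hgtopne : g.coeff (m-1) ≠ 0 := by rw [hgtop]; exact hm0
  have hgne : g ≠ 0 := fun h => by simp [h] at hgtopne
  have hfdeg0 : f.natDegree ≠ 0 := by omega
  have hgdeg : g.natDegree = m - 1 := by
    have hlt : g.natDegree < m := by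
      rw [hg]
      have := natDegree_derivative_lt hfdeg0
      omega
    have hge : m - 1 ≤ g.natDegree := le_natDegree_of_ne_zero hgtopne
    omega
  have hgroots : Multiset.card g.roots = m - 1 := by
    have h1 : Multiset.card g.roots ≤ g.natDegree := card_roots' g
    rw [hgdeg] at h1
    have h2 : m ≤ Multiset.card g.roots + 1 := by
      rw [hg]
      have := f.card_roots_le_derivative
      rwa [hrootscard] at this
    omega
  have hsplits : Splits g := by
    rw [splits_iff_card_roots, hgdeg, hgroots]
  have hlead : g.leadingCoeff = (m : ℝ) := by
    rw [Polynomial.leadingCoeff, hgdeg, hgtop]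
  have hgfact : g = C (m:ℝ) * ((g.roots.map Neg.neg).map (fun a => X + C a)).prod := by
    have hmm : ((g.roots.map Neg.neg).map (fun a => X + C a))
        = g.roots.map (fun a => X - C a) := by
      rw [Multiset.map_map]
      apply Multiset.map_congr rfl
      intro a _
      simp [Function.comp, map_neg, sub_eq_add_neg]
    rw [hmm]
    have := hsplits.eq_prod_roots
    rwa [hlead] at this
  refine ⟨g.roots.map Neg.neg, by simp [hgroots], ?_⟩
  intro r hr
  have hcard : Multiset.card (g.roots.map Neg.neg) = m - 1 := by simp [hgroots]
  have h1 : g.coeff (m-1-r) = (m:ℝ) * (g.roots.map Neg.neg).esymm r := by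
    conv_lhs => rw [hgfact]
    rw [Polynomial.coeff_C_mul, Multiset.prod_X_add_C_coeff _ (by omega : m-1-r ≤ Multiset.card (g.roots.map Neg.neg))]
    rw [hcard, show m - 1 - (m-1-r) = r by omega]
  have h2 : g.coeff (m-1-r) = ((m - r : ℕ) : ℝ) * s.esymm r := by
    rw [hgc, show m-1-r+1 = m-r by omega, hcoeff (m-r) (by omega), show m - (m-r) = r by omega]
    ring
  rw [← h1, h2]


open Multiset Polynomial


/-- Normalized symmetric function `pₖ = eₖ / C(m,k)`. -/
noncomputable def pn (s : Multiset ℝ) (k : ℕ) : ℝ :=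
  s.esymm k / ((Multiset.card s).choose k : ℝ)

lemma choose_id (m r : ℕ) (h : r < m) :
    m * (m-1).choose r = m.choose r * (m - r) := by
  have h1 := Nat.add_one_mul_choose_eq (m-1) r
  have h2 := Nat.choose_succ_right_eq m r
  rw [show m-1+1 = m by omega] at h1
  exact h1.trans h2

lemma newton_base (s : Multiset ℝ) (h2 : 2 ≤ Multiset.card s) :
    pn s 0 * pn s 2 ≤ pn s 1 ^ 2 := by
  set m := Multiset.card s with hm
  have hm0 : (0:ℝ) < (m : ℝ) := by exact_mod_cast (by omega : 0 < m)
  have hc2 : (0:ℝ) < (m.choose 2 : ℝ) := by exact_mod_cast Nat.choose_pos h2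
  have hA := lemA s
  rw [← hm] at hA
  rw [pn, pn, pn, esymm_zero', Nat.choose_zero_right, Nat.choose_one_right, ← hm]
  rw [Nat.cast_one, div_one, one_mul, div_pow, div_le_div_iff₀ hc2 (by positivity)]
  rw [esymm_one'] at *
  nlinarith [hA]

lemma newton (m : ℕ) : ∀ s : Multiset ℝ, Multiset.card s = m → ∀ k, k + 2 ≤ m →
    pn s k * pn s (k+2) ≤ pn s (k+1) ^ 2 := by
  induction m using Nat.strong_induction_on with
  | _ m ih =>
    intro s hm k hk
    rcases Nat.eq_zero_or_pos k with rfl | hk1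
    · have := newton_base s (by omega)
      simpa using this
    rcases Nat.lt_or_ge (k + 2) m with hlt | hge
    · -- derivative step
      obtain ⟨ν, hν, htr⟩ := deriv_esymm s m hm (by omega)
      have hmr : (0:ℝ) < (m:ℝ) := by exact_mod_cast (by omega : 0 < m)
      have key : ∀ r, r ≤ m - 1 → pn ν r = pn s r := by
        intro r hr
        have hc1 : (0:ℝ) < (((m-1).choose r : ℕ) : ℝ) := by
          exact_mod_cast Nat.choose_pos (by omega : r ≤ m - 1)
        have hc2 : (0:ℝ) < ((m.choose r : ℕ) : ℝ) := by
          exact_mod_cast Nat.choose_pos (by omega : r ≤ m)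
        rw [pn, pn, hν, hm, div_eq_div_iff hc1.ne' hc2.ne']
        have hid : ((m:ℕ):ℝ) * ((m-1).choose r : ℝ) = (m.choose r : ℝ) * ((m - r : ℕ) : ℝ) := by
          exact_mod_cast choose_id m r (by omega)
        have ht := htr r hr
        apply mul_left_cancel₀ hmr.ne'
        calc (m:ℝ) * (ν.esymm r * (m.choose r : ℝ))
            = ((m:ℝ) * ν.esymm r) * (m.choose r : ℝ) := by ring
          _ = (((m - r : ℕ):ℝ) * s.esymm r) * (m.choose r : ℝ) := by rw [ht]
          _ = s.esymm r * ((m.choose r : ℝ) * ((m - r:ℕ):ℝ)) := by ring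
          _ = s.esymm r * ((m:ℝ) * ((m-1).choose r : ℝ)) := by rw [← hid]
          _ = (m:ℝ) * (s.esymm r * ((m-1).choose r : ℝ)) := by ring
      have hind := ih (m-1) (by omega) ν hν k (by omega)
      rwa [key k (by omega), key (k+1) (by omega), key (k+2) (by omega)] at hind
    · -- reversal: k + 2 = m
      have hkm : k + 2 = m := le_antisymm hk hge
      by_cases hz : s.esymm m = 0
      · have hz2 : pn s (k+2) = 0 := by rw [pn, hkm, hz, zero_div]
        rw [hz2, mul_zero]
        positivity
      · have hprod : s.prod ≠ 0 := by rw [← esymm_card, hm]; exact hz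
        have h0 : ∀ x ∈ s, x ≠ 0 := by
          intro x hx hx0
          exact hprod (Multiset.prod_eq_zero (hx0 ▸ hx))
        set w := s.map (·⁻¹) with hw
        have hcw : Multiset.card w = m := by rw [hw, Multiset.card_map, hm]
        have hbase := newton_base w (by omega)
        have hinv := esymm_map_inv s h0
        rw [hm] at hinv
        have he1 : w.esymm 1 * s.prod = s.esymm (m - 1) := hinv 1 (by omega)
        have he2 : w.esymm 2 * s.prod = s.esymm (m - 2) := hinv 2 (by omega)
        rw [pn, pn, pn, esymm_zero', hcw, Nat.choose_zero_right, Nat.cast_one, div_one,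
          one_mul, Nat.choose_one_right] at hbase
        -- hbase : w.esymm 2 / C(m,2) ≤ (w.esymm 1 / m)^2
        have hc2 : (0:ℝ) < (m.choose 2 : ℝ) := by exact_mod_cast Nat.choose_pos (by omega)
        have hmr : (0:ℝ) < (m:ℝ) := by exact_mod_cast (by omega : 0 < m)
        have hP2 : (0:ℝ) < s.prod ^ 2 := by positivity
        rw [pn, pn, pn, hm]
        have hCk : (m.choose k : ℝ) = (m.choose 2 : ℝ) := by
          have : m.choose k = m.choose 2 := by
            rw [show k = m - 2 by omega, Nat.choose_symm (by omega)]
          exact_mod_cast this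
        have hCk1 : (m.choose (k+1) : ℝ) = (m:ℝ) := by
          have : m.choose (k+1) = m := by
            rw [show k + 1 = m - 1 by omega, Nat.choose_symm (by omega), Nat.choose_one_right]
          exact_mod_cast this
        have hCk2 : (m.choose (k+2) : ℝ) = 1 := by
          rw [hkm, Nat.choose_self, Nat.cast_one]
        rw [hCk, hCk1, hCk2, div_one]
        have hek : s.esymm k = s.esymm (m-2) := by rw [show k = m - 2 by omega]
        have hek1 : s.esymm (k+1) = s.esymm (m-1) := by rw [show k + 1 = m - 1 by omega]
        have hek2 : s.esymm (k+2) = s.prod := by rw [hkm, ← hm, esymm_card]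
        rw [hek, hek1, hek2, ← he1, ← he2]
        have expand : w.esymm 2 * s.prod / (m.choose 2 : ℝ) * s.prod
            = (w.esymm 2 / (m.choose 2 : ℝ)) * s.prod ^ 2 := by ring
        rw [expand, div_pow, mul_pow]
        calc (w.esymm 2 / (m.choose 2 : ℝ)) * s.prod ^ 2
            ≤ ((w.esymm 1 / (m:ℝ))^2) * s.prod ^ 2 :=
              mul_le_mul_of_nonneg_right hbase hP2.le
          _ = w.esymm 1 ^ 2 * s.prod ^ 2 / (m:ℝ) ^ 2 := by ring

open Multiset
lemma choose_logconcave (m k : ℕ) (h1 : 1 ≤ k) (hk : k + 1 ≤ m) :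
    m.choose (k-1) * m.choose (k+1) ≤ m.choose k ^ 2 := by
  have hA := Nat.choose_succ_right_eq m k
  have hB := Nat.choose_succ_right_eq m (k-1)
  rw [show k-1+1 = k by omega] at hB
  have e1 : m.choose (k-1) * m.choose (k+1) * ((k+1) * (m-(k-1)))
      = (m.choose (k-1) * (m-(k-1))) * (m.choose (k+1) * (k+1)) := by ring
  rw [← hB, hA] at e1
  have e2 : (m.choose k * k) * (m.choose k * (m-k)) = m.choose k ^ 2 * (k * (m-k)) := by ring
  rw [e2] at e1
  have hmono : k * (m-k) ≤ (k+1) * (m-(k-1)) :=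
    Nat.mul_le_mul (by omega) (by omega)
  have hle : m.choose (k-1) * m.choose (k+1) * ((k+1) * (m-(k-1)))
      ≤ m.choose k ^ 2 * ((k+1) * (m-(k-1))) := by
    rw [e1]
    exact Nat.mul_le_mul_left _ hmono
  have hpos : 0 < (k+1) * (m-(k-1)) := Nat.mul_pos (Nat.succ_pos k) (by omega)
  exact Nat.le_of_mul_le_mul_right hle hpos

lemma newton_unnorm (s : Multiset ℝ) (k : ℕ) (h1 : 1 ≤ k) (hk : k + 1 ≤ Multiset.card s) :
    s.esymm (k-1) * s.esymm (k+1) ≤ s.esymm k ^ 2 := by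
  set m := Multiset.card s with hm
  have hnewt := newton m s rfl (k-1) (by omega)
  rw [show k-1+2 = k+1 by omega, show k-1+1 = k by omega] at hnewt
  have hc0 : (0:ℝ) < (m.choose (k-1) : ℝ) := by
    exact_mod_cast Nat.choose_pos (by omega : k - 1 ≤ m)
  have hc1 : (0:ℝ) < (m.choose k : ℝ) := by
    exact_mod_cast Nat.choose_pos (by omega : k ≤ m)
  have hc2 : (0:ℝ) < (m.choose (k+1) : ℝ) := by
    exact_mod_cast Nat.choose_pos (by omega : k + 1 ≤ m)
  have hlc : (m.choose (k-1) : ℝ) * (m.choose (k+1) : ℝ) ≤ ((m.choose k : ℝ))^2 := by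
    exact_mod_cast choose_logconcave m k h1 (by omega)
  have e1 : s.esymm (k-1) = pn s (k-1) * (m.choose (k-1) : ℝ) := by
    rw [pn, ← hm, div_mul_cancel₀ _ hc0.ne']
  have e2 : s.esymm (k+1) = pn s (k+1) * (m.choose (k+1) : ℝ) := by
    rw [pn, ← hm, div_mul_cancel₀ _ hc2.ne']
  have e3 : s.esymm k = pn s k * (m.choose k : ℝ) := by
    rw [pn, ← hm, div_mul_cancel₀ _ hc1.ne']
  calc s.esymm (k-1) * s.esymm (k+1)
      = (pn s (k-1) * pn s (k+1)) * ((m.choose (k-1):ℝ) * (m.choose (k+1):ℝ)) := by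
        rw [e1, e2]; ring
    _ ≤ pn s k ^ 2 * ((m.choose (k-1):ℝ) * (m.choose (k+1):ℝ)) :=
        mul_le_mul_of_nonneg_right hnewt (by positivity)
    _ ≤ pn s k ^ 2 * ((m.choose k:ℝ))^2 :=
        mul_le_mul_of_nonneg_left hlc (sq_nonneg _)
    _ = s.esymm k ^ 2 := by rw [e3]; ring

open Multiset


lemma keyLemma : ∀ r : ℕ, 1 ≤ r → ∀ (a : ℝ) (t : Multiset ℝ),
    (∀ j, 1 ≤ j → j ≤ r → 0 < (a ::ₘ t).esymm j) →
    ∀ j, j ≤ r - 1 → 0 < t.esymm j := by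
  intro r
  induction r with
  | zero => omega
  | succ r ihr =>
    intro _ a t hS j hj
    rcases Nat.eq_zero_or_pos r with rfl | hr1
    · interval_cases j
      rw [esymm_zero']; norm_num
    have hprev : ∀ j, j ≤ r - 1 → 0 < t.esymm j :=
      ihr hr1 a t (fun j h1 h2 => hS j h1 (by omega))
    rcases Nat.lt_or_ge j r with hjr | hjr
    · exact hprev j (by omega)
    have hjr' : j = r := by omega
    rw [hjr']
    by_contra hneg
    push_neg at hneg
    -- t.esymm r ≤ 0, derive contradiction
    have h1 : 0 < t.esymm (r-1) := hprev (r-1) le_rfl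
    have hSr : 0 < t.esymm r + a * t.esymm (r-1) := by
      have := hS r hr1 (by omega)
      rwa [show r = (r-1)+1 by omega, esymm_cons, show r-1+1 = r by omega] at this
    have hSr1 : 0 < t.esymm (r+1) + a * t.esymm r := by
      have := hS (r+1) (by omega) le_rfl
      rwa [esymm_cons] at this
    have ha : 0 < a := by nlinarith
    rcases Nat.lt_or_ge (Multiset.card t) (r+1) with hcard | hcard
    · have hz : t.esymm (r+1) = 0 := esymm_of_card_lt hcard
      rw [hz, zero_add] at hSr1
      nlinarith
    · have hN := newton_unnorm t r hr1 hcard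
      nlinarith



lemma esymm_eq_multiset (n j : ℕ) (x : Fin n → ℝ) :
    esymm n j x = (Finset.univ.val.map x).esymm j :=
  (Finset.esymm_map_val x Finset.univ j).symm

lemma univ_val_decomp (n : ℕ) (i : Fin n) :
    (Finset.univ : Finset (Fin n)).val = i ::ₘ (Finset.univ.erase i).val := by
  rw [Finset.erase_val]
  exact (Multiset.cons_erase (Finset.mem_univ i)).symm

lemma map_erase_update (n : ℕ) (x : Fin n → ℝ) (i : Fin n) (c : ℝ) :
    (Finset.univ.erase i).val.map (Function.update x i c)
      = (Finset.univ.erase i).val.map x := by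
  apply Multiset.map_congr rfl
  intro a ha
  have : a ≠ i := Finset.ne_of_mem_erase (Finset.mem_def.mpr ha)
  simp [Function.update_apply, this]

lemma update_step (n r : ℕ) (hr1 : 1 ≤ r) (x : Fin n → ℝ) (i : Fin n) (c : ℝ) (hc : x i ≤ c)
    (hx : ∀ j, 1 ≤ j → j ≤ r → 0 < esymm n j x) :
    (∀ j, 1 ≤ j → j ≤ r → 0 < esymm n j (Function.update x i c)) ∧
      (∀ j, 1 ≤ j → j ≤ r → esymm n j x ≤ esymm n j (Function.update x i c)) := by
  set T : Multiset ℝ := (Finset.univ.erase i).val.map x with hT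
  have hdec : ∀ (f : Fin n → ℝ), Finset.univ.val.map f = f i ::ₘ (Finset.univ.erase i).val.map f := by
    intro f
    rw [univ_val_decomp n i, Multiset.map_cons]
  have hxm : ∀ j, esymm n j x = (x i ::ₘ T).esymm j := by
    intro j; rw [esymm_eq_multiset, hdec]
  have hym : ∀ j, esymm n j (Function.update x i c) = (c ::ₘ T).esymm j := by
    intro j
    rw [esymm_eq_multiset, hdec, map_erase_update, Function.update_self]
  have hkey : ∀ j, j ≤ r - 1 → 0 < T.esymm j := by
    apply keyLemma r hr1 (x i) T
    intro j h1 h2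
    rw [← hxm j]; exact hx j h1 h2
  have main : ∀ j, 1 ≤ j → j ≤ r →
      0 < esymm n j (Function.update x i c) ∧ esymm n j x ≤ esymm n j (Function.update x i c) := by
    intro j h1 h2
    obtain ⟨j', rfl⟩ : ∃ j', j = j' + 1 := ⟨j - 1, by omega⟩
    have hTj : 0 < T.esymm j' := hkey j' (by omega)
    rw [hxm, hym, esymm_cons, esymm_cons]
    constructor
    · have := hx (j'+1) h1 h2
      rw [hxm, esymm_cons] at this
      nlinarith
    · nlinarith
  exact ⟨fun j h1 h2 => (main j h1 h2).1, fun j h1 h2 => (main j h1 h2).2⟩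

lemma step_all (n r : ℕ) (hr1 : 1 ≤ r) (x y : Fin n → ℝ)
    (hx : ∀ j, 1 ≤ j → j ≤ r → 0 < esymm n j x) (hxy : ∀ i, x i ≤ y i) :
    ∀ s : Finset (Fin n),
      (∀ j, 1 ≤ j → j ≤ r → 0 < esymm n j (fun i => if i ∈ s then y i else x i)) ∧
      (∀ j, 1 ≤ j → j ≤ r →
        esymm n j x ≤ esymm n j (fun i => if i ∈ s then y i else x i)) := by
  intro s
  induction s using Finset.induction_on with
  | empty =>
    have : (fun i => if i ∈ (∅ : Finset (Fin n)) then y i else x i) = x := by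
      funext i; simp
    rw [this]
    exact ⟨hx, fun j _ _ => le_rfl⟩
  | @insert a s ha ih =>
    set g : Fin n → ℝ := fun i => if i ∈ s then y i else x i with hg
    have hgy : (fun i => if i ∈ insert a s then y i else x i) = Function.update g a (y a) := by
      funext i
      by_cases h : i = a
      · subst h; simp [Function.update_self, hg, ha]
      · simp [Function.update_apply, h, hg, Finset.mem_insert]
    have hga : g a ≤ y a := by
      rw [hg]; simp [ha]; exact hxy a
    have := update_step n r hr1 g a (y a) hga ih.1
    rw [hgy]
    exact ⟨this.1, fun j h1 h2 => le_trans (ih.2 j h1 h2) (this.2 j h1 h2)⟩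


end GC


/-- For `n ≥ 1` and `1 ≤ r ≤ n`: if `λ ∈ Γ_r` and `μ ∈ ℝⁿ` satisfies `μᵢ ≥ λᵢ` for
every `i`, then `μ ∈ Γ_r` and `S_r(μ) ≥ S_r(λ)`. -/
theorem gardingCone_mono (n r : ℕ) (hn : 1 ≤ n) (hr1 : 1 ≤ r) (hrn : r ≤ n)
    (x y : Fin n → ℝ) (hx : x ∈ gardingCone n r) (hxy : ∀ i, x i ≤ y i) :
    y ∈ gardingCone n r ∧ esymm n r x ≤ esymm n r y := by
  have h := GC.step_all n r hr1 x y hx hxy Finset.univ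
  have hy : (fun i => if i ∈ (Finset.univ : Finset (Fin n)) then y i else x i) = y := by
    funext i; simp
  rw [hy] at h
  exact ⟨h.1, h.2 r hr1 le_rfl⟩
end

section
/- Let n ≥ 1 and 1 ≤ r ≤ n. If λ lies in the topological boundary of the Gårding cone Γ_r in ℝⁿ, then S_r(λ) = 0. -/
lemma esymm_continuous (n j : ℕ) : Continuous (esymm n j) := by
  show Continuous fun x : Fin n → ℝ =>
    ∑ s ∈ Finset.powersetCard j (Finset.univ : Finset (Fin n)), ∏ i ∈ s, x i
  exact continuous_finset_sum _ fun s _ => continuous_finset_prod _ fun i _ => continuous_apply i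

lemma gardingCone_isOpen (n r : ℕ) : IsOpen (gardingCone n r) := by
  have h : gardingCone n r = ⋂ j ∈ Finset.Icc 1 r, {x : Fin n → ℝ | 0 < esymm n j x} := by
    ext y
    simp only [gardingCone, Set.mem_setOf_eq, Set.mem_iInter, Finset.mem_Icc]
    exact ⟨fun hy j hj => hy j hj.1 hj.2, fun hy j h1 h2 => hy j ⟨h1, h2⟩⟩
  rw [h]
  exact isOpen_biInter_finset fun j _ => isOpen_lt continuous_const (esymm_continuous n j)

lemma multiset_prod_pos_aux (s : Multiset ℝ) (h : ∀ a ∈ s, 0 < a) : 0 < s.prod := by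
  induction s using Multiset.induction with
  | empty => simp
  | cons a s ih =>
    rw [Multiset.prod_cons]
    exact mul_pos (h a (Multiset.mem_cons_self a s))
      (ih fun b hb => h b (Multiset.mem_cons_of_mem hb))

lemma multiset_sum_pos_aux (s : Multiset ℝ) (h : ∀ a ∈ s, 0 < a) (hs : s ≠ 0) : 0 < s.sum := by
  induction s using Multiset.induction with
  | empty => exact absurd rfl hs
  | cons a s ih =>
    rw [Multiset.sum_cons]
    have ha : 0 < a := h a (Multiset.mem_cons_self a s)
    have hsum : 0 ≤ s.sum := by
      rcases eq_or_ne s 0 with h0 | h0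
      · simp [h0]
      · exact (ih (fun b hb => h b (Multiset.mem_cons_of_mem hb)) h0).le
    linarith

lemma esymm_pos_aux (s : Multiset ℝ) (h : ∀ a ∈ s, 0 < a) (k : ℕ)
    (hk : k ≤ Multiset.card s) : 0 < s.esymm k := by
  rw [Multiset.esymm]
  apply multiset_sum_pos_aux
  · intro b hb
    obtain ⟨t, ht, rfl⟩ := Multiset.mem_map.mp hb
    exact multiset_prod_pos_aux t fun a ha =>
      h a (Multiset.mem_of_le (Multiset.mem_powersetCard.mp ht).1 ha)
  · rw [Ne, Multiset.map_eq_zero]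
    intro h0
    have hc := Multiset.card_powersetCard k s
    rw [h0] at hc
    simp only [Multiset.card_zero] at hc
    have := Nat.choose_pos hk
    omega

open Polynomial in
/-- For `n ≥ 1` and `1 ≤ r ≤ n`: if `λ` lies in the topological boundary of the
Gårding cone `Γ_r` in `ℝⁿ`, then `S_r(λ) = 0`. -/
theorem esymm_eq_zero_on_frontier (n r : ℕ) (hn : 1 ≤ n) (hr1 : 1 ≤ r) (hrn : r ≤ n)
    (x : Fin n → ℝ) (hx : x ∈ frontier (gardingCone n r)) :
    esymm n r x = 0 := by
  have hclos : x ∈ closure (gardingCone n r) := hx.1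
  have hnot : x ∉ gardingCone n r := fun hmem =>
    hx.2 (by rwa [(gardingCone_isOpen n r).interior_eq])
  -- nonnegativity on the closure
  have hge : ∀ j : ℕ, 1 ≤ j → j ≤ r → 0 ≤ esymm n j x := by
    intro j h1 h2
    have hsub : gardingCone n r ⊆ {y : Fin n → ℝ | 0 ≤ esymm n j y} :=
      fun y hy => (hy j h1 h2).le
    have hcl : IsClosed {y : Fin n → ℝ | 0 ≤ esymm n j y} :=
      isClosed_le continuous_const (esymm_continuous n j)
    exact closure_minimal hsub hcl hclos
  by_contra hne
  have hxr : 0 < esymm n r x := lt_of_le_of_ne (hge r hr1 le_rfl) (Ne.symm hne)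
  -- the polynomial P(t) = ∏ (t + x i)
  set P : ℝ[X] := ∏ i : Fin n, (X + C (x i)) with hP
  have hE0 : esymm n 0 x = 1 := by simp [esymm]
  have hE : ∀ k : ℕ, k ≤ r → 0 ≤ esymm n k x := by
    intro k hk
    rcases Nat.eq_zero_or_pos k with h0 | h0
    · rw [h0, hE0]; norm_num
    · exact hge k h0 hk
  have hP_coeff : ∀ k : ℕ, k ≤ n → P.coeff (n - k) = esymm n k x := by
    intro k hk
    have hcard : (Finset.univ : Finset (Fin n)).card = n := by simp
    have h1 : n - k ≤ (Finset.univ : Finset (Fin n)).card := by omega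
    rw [hP, Finset.prod_X_add_C_coeff _ _ h1]
    have h2 : (Finset.univ : Finset (Fin n)).card - (n - k) = k := by omega
    rw [h2, esymm]
  have hPdeg : P.natDegree = n := by
    rw [hP, Polynomial.natDegree_prod _ _ fun i _ => (Polynomial.monic_X_add_C (x i)).ne_zero]
    simp
  set D : ℝ[X] := derivative^[n - r] P with hD
  have hD_coeff : ∀ k : ℕ, k ≤ r →
      D.coeff (r - k) = ((n - k).descFactorial (n - r) : ℝ) * esymm n k x := by
    intro k hk
    rw [hD, Polynomial.coeff_iterate_derivative]
    have h1 : r - k + (n - r) = n - k := by omega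
    rw [h1, hP_coeff k (hk.trans hrn), nsmul_eq_mul]
  have hdf : ∀ k : ℕ, k ≤ r → (0 : ℝ) < ((n - k).descFactorial (n - r) : ℝ) := by
    intro k hk
    have h0 : (n - k).descFactorial (n - r) ≠ 0 := by
      rw [Ne, Nat.descFactorial_eq_zero_iff_lt]; omega
    exact_mod_cast Nat.pos_of_ne_zero h0
  have hDdeg_le : D.natDegree ≤ r := by
    have h := Polynomial.natDegree_iterate_derivative P (n - r)
    rw [hPdeg, ← hD] at h
    omega
  -- root counting
  have hsplits : P.Splits :=
    Polynomial.Splits.prod fun i _ =>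
      Polynomial.Splits.of_natDegree_le_one (le_of_eq (Polynomial.natDegree_X_add_C _))
  have hProots : Multiset.card P.roots = n := by
    rw [Polynomial.splits_iff_card_roots.mp hsplits, hPdeg]
  have key : ∀ m : ℕ, n ≤ Multiset.card (derivative^[m] P).roots + m := by
    intro m
    induction m with
    | zero => simpa using hProots.ge
    | succ m ih =>
      have h := Polynomial.card_roots_le_derivative (derivative^[m] P)
      rw [Function.iterate_succ_apply']
      omega
  have hDroots : Multiset.card D.roots = r := by
    have h1 := key (n - r)
    have h2 := Polynomial.card_roots' D
    rw [← hD] at h1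
    omega
  have hDdeg : D.natDegree = r := by
    have h2 := Polynomial.card_roots' D
    omega
  -- positivity of coefficients
  have hcoeff_nonneg : ∀ m : ℕ, 0 ≤ D.coeff m := by
    intro m
    rcases le_or_gt m r with hm | hm
    · have hk : r - (r - m) = m := by omega
      have := hD_coeff (r - m) (by omega)
      rw [hk] at this
      rw [this]
      exact mul_nonneg (hdf (r - m) (by omega)).le (hE (r - m) (by omega))
    · rw [Polynomial.coeff_eq_zero_of_natDegree_lt (by omega)]
  have hD0 : 0 < D.coeff 0 := by
    have := hD_coeff r le_rfl
    rw [Nat.sub_self] at this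
    rw [this]
    exact mul_pos (hdf r le_rfl) hxr
  have heval : ∀ t : ℝ, 0 ≤ t → 0 < D.eval t := by
    intro t ht
    rw [Polynomial.eval_eq_sum_range]
    have h0 : (0 : ℝ) < D.coeff 0 * t ^ 0 := by simpa using hD0
    refine lt_of_lt_of_le h0 (Finset.single_le_sum (f := fun i => D.coeff i * t ^ i)
      (fun i _ => mul_nonneg (hcoeff_nonneg i) (pow_nonneg ht i)) ?_)
    simp
  have hroots_neg : ∀ a ∈ D.roots, a < 0 := by
    intro a ha
    by_contra h
    push_neg at h
    exact (heval a h).ne' (Polynomial.isRoot_of_mem_roots ha)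
  have hsplitD : D.Splits :=
    Polynomial.splits_iff_card_roots.mpr (by rw [hDroots, hDdeg])
  have hfact := Polynomial.Splits.eq_prod_roots hsplitD
  have hlead : 0 < D.leadingCoeff := by
    rw [Polynomial.leadingCoeff, hDdeg]
    have h0 := hD_coeff 0 (by omega)
    rw [Nat.sub_zero] at h0
    rw [h0, hE0, mul_one]
    exact hdf 0 (by omega)
  -- conclude positivity of all esymm
  have hfinal : ∀ j : ℕ, 1 ≤ j → j ≤ r → 0 < esymm n j x := by
    intro k h1k hkr
    have hμ : ∀ b ∈ D.roots.map (fun a => -a), 0 < b := by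
      intro b hb
      obtain ⟨a, ha, rfl⟩ := Multiset.mem_map.mp hb
      linarith [hroots_neg a ha]
    have hcardμ : Multiset.card (D.roots.map (fun a => -a)) = r := by
      rw [Multiset.card_map, hDroots]
    have hprod : (D.roots.map fun a => (X : ℝ[X]) - C a)
        = (D.roots.map (fun a => -a)).map fun b => X + C b := by
      rw [Multiset.map_map]
      apply Multiset.map_congr rfl
      intro a _
      simp [sub_eq_add_neg]
    have hco : D.coeff (r - k) = D.leadingCoeff * ((D.roots.map (fun a => -a)).esymm k) := by
      conv_lhs => rw [hfact]
      rw [hprod, Polynomial.coeff_C_mul,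
        Multiset.prod_X_add_C_coeff _ (by rw [hcardμ]; omega), hcardμ, Nat.sub_sub_self hkr]
    have hpos : 0 < (D.roots.map (fun a => -a)).esymm k :=
      esymm_pos_aux _ hμ k (by rw [hcardμ]; exact hkr)
    have hposc : 0 < D.coeff (r - k) := by
      rw [hco]; exact mul_pos hlead hpos
    rw [hD_coeff k hkr] at hposc
    nlinarith [hdf k hkr, hE k hkr]
  exact hnot hfinal
end

section
/- Let Ω ⊆ ℝⁿ be open, let Φ : Ω → ℝ be twice continuously differentiable and bounded on Ω, let A : Ω → (real symmetric positive semidefinite n×n matrices) be any map, and let M > 0. Suppose that at every x ∈ Ω, tr(A(x) · Hess Φ(x)) ≤ M (1 + |∇Φ(x)| + tr A(x) + ⟨A(x) ∇Φ(x), ∇Φ(x)⟩). Then for every a₀ ≥ M there exists a constant M' > 0, depending only on M, a₀ and sup_Ω |Φ|, such that the function Φ̃ = 1 − e^{−a₀ Φ} satisfies, at every x ∈ Ω, tr(A(x) · Hess Φ̃(x)) ≤ M' (1 + |∇Φ̃(x)| + tr A(x)). -/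
/-- The `i`-th partial derivative of `f : ℝⁿ → ℝ` at `x`. -/
noncomputable def partialDeriv' {n : ℕ} (f : (Fin n → ℝ) → ℝ) (i : Fin n)
    (x : Fin n → ℝ) : ℝ :=
  fderiv ℝ f x (Pi.single i 1)

/-- The Hessian matrix of `f : ℝⁿ → ℝ` at `x`. -/
noncomputable def hessian {n : ℕ} (f : (Fin n → ℝ) → ℝ) (x : Fin n → ℝ) :
    Matrix (Fin n) (Fin n) ℝ :=
  Matrix.of fun i j => partialDeriv' (partialDeriv' f j) i x

/-- The Euclidean norm of the gradient of `f : ℝⁿ → ℝ` at `x`. -/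
noncomputable def gradNorm {n : ℕ} (f : (Fin n → ℝ) → ℝ) (x : Fin n → ℝ) : ℝ :=
  Real.sqrt (∑ i, (partialDeriv' f i x) ^ 2)

/-- Exponential barrier transformation.  Let `Ω ⊆ ℝⁿ` be open, `Φ : Ω → ℝ` be `C²` and
bounded on `Ω` (say `|Φ| ≤ B` on `Ω`), `A : Ω → ` (symmetric positive semidefinite
matrices), and `M > 0`.  If at every `x ∈ Ω`
`tr(A(x)·Hess Φ(x)) ≤ M (1 + |∇Φ(x)| + tr A(x) + ⟨A(x)∇Φ(x), ∇Φ(x)⟩)`,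
then for every `a₀ ≥ M` there is `M' > 0`, depending only on `M`, `a₀` and `B`, such
that `Φ̃ = 1 − e^{−a₀Φ}` satisfies
`tr(A(x)·Hess Φ̃(x)) ≤ M' (1 + |∇Φ̃(x)| + tr A(x))` at every `x ∈ Ω`. -/
theorem exp_barrier_transform (n : ℕ) (Ω : Set (Fin n → ℝ)) (hΩ : IsOpen Ω)
    (Φ : (Fin n → ℝ) → ℝ) (hΦ : ContDiffOn ℝ 2 Φ Ω)
    (B : ℝ) (hB : ∀ x ∈ Ω, |Φ x| ≤ B)
    (A : (Fin n → ℝ) → Matrix (Fin n) (Fin n) ℝ) (hA : ∀ x ∈ Ω, (A x).PosSemidef)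
    (M : ℝ) (hM : 0 < M)
    (hineq : ∀ x ∈ Ω,
      Matrix.trace (A x * hessian Φ x) ≤
        M * (1 + gradNorm Φ x + Matrix.trace (A x) +
          ∑ i, ∑ j, A x i j * partialDeriv' Φ j x * partialDeriv' Φ i x)) :
    ∀ a₀ : ℝ, M ≤ a₀ →
      ∃ M' : ℝ, 0 < M' ∧
        ∀ x ∈ Ω,
          Matrix.trace (A x * hessian (fun y => 1 - Real.exp (-a₀ * Φ y)) x) ≤
            M' * (1 + gradNorm (fun y => 1 - Real.exp (-a₀ * Φ y)) x +
              Matrix.trace (A x)) := by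
  intro a₀ ha₀
  have ha₀0 : 0 < a₀ := lt_of_lt_of_le hM ha₀
  set g : (Fin n → ℝ) → ℝ := fun y => 1 - Real.exp (-a₀ * Φ y) with hgdef
  set c : (Fin n → ℝ) → ℝ := fun x => a₀ * Real.exp (-a₀ * Φ x) with hcdef
  have hc0 : ∀ x, 0 < c x := fun x => by positivity
  -- differentiability
  have hΦd : ∀ x ∈ Ω, DifferentiableAt ℝ Φ x := fun x hx =>
    (hΦ.differentiableOn (by norm_num)).differentiableAt (hΩ.mem_nhds hx)
  have hfd : DifferentiableOn ℝ (fderiv ℝ Φ) Ω :=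
    (hΦ.fderiv_of_isOpen (m := 1) hΩ (by norm_num)).differentiableOn one_ne_zero
  have hPd : ∀ (j : Fin n), ∀ x ∈ Ω, DifferentiableAt ℝ (partialDeriv' Φ j) x := by
    intro j x hx
    exact ((ContinuousLinearMap.apply ℝ ℝ (Pi.single j 1 : Fin n → ℝ)).differentiable.differentiableAt).comp
      x (hfd.differentiableAt (hΩ.mem_nhds hx))
  -- gradient of g
  have hgrad : ∀ x ∈ Ω, ∀ i, partialDeriv' g i x = c x * partialDeriv' Φ i x := by
    intro x hx i
    have h1 : HasFDerivAt Φ (fderiv ℝ Φ x) x := (hΦd x hx).hasFDerivAt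
    have h2 := (h1.const_mul (-a₀)).exp.const_sub 1
    show fderiv ℝ g x (Pi.single i 1) = _
    rw [h2.fderiv]
    simp [hcdef, partialDeriv']
    ring
  -- hessian of g
  have hhess : ∀ x ∈ Ω, ∀ i j, hessian g x i j
      = c x * (hessian Φ x i j - a₀ * partialDeriv' Φ i x * partialDeriv' Φ j x) := by
    intro x hx i j
    have heq : partialDeriv' g j =ᶠ[nhds x]
        (fun y => c y * partialDeriv' Φ j y) := by
      filter_upwards [hΩ.mem_nhds hx] with y hy using hgrad y hy j
    have h1 : HasFDerivAt Φ (fderiv ℝ Φ x) x := (hΦd x hx).hasFDerivAt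
    have hcD : HasFDerivAt c (a₀ • (Real.exp (-a₀ * Φ x) • ((-a₀) • fderiv ℝ Φ x))) x :=
      ((h1.const_mul (-a₀)).exp).const_mul a₀
    have hpD : HasFDerivAt (partialDeriv' Φ j) (fderiv ℝ (partialDeriv' Φ j) x) x :=
      (hPd j x hx).hasFDerivAt
    have hmul := hcD.mul hpD
    have hstep : partialDeriv' (partialDeriv' g j) i x =
        (c x • fderiv ℝ (partialDeriv' Φ j) x
          + partialDeriv' Φ j x • a₀ • Real.exp (-a₀ * Φ x) • (-a₀) • fderiv ℝ Φ x)
          (Pi.single i 1) := by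
      show fderiv ℝ (partialDeriv' g j) x (Pi.single i 1) = _
      rw [heq.fderiv_eq, show (fun y => c y * partialDeriv' Φ j y) = c * partialDeriv' Φ j from rfl, hmul.fderiv]
    rw [show hessian g x i j = partialDeriv' (partialDeriv' g j) i x from rfl, hstep,
      show hessian Φ x i j = fderiv ℝ (partialDeriv' Φ j) x (Pi.single i 1) from rfl]
    simp [hcdef, partialDeriv']
    ring
  -- gradNorm of g
  have hgn : ∀ x ∈ Ω, gradNorm g x = c x * gradNorm Φ x := by
    intro x hx
    unfold gradNorm
    have hs : ∑ i, (partialDeriv' g i x) ^ 2 = (c x)^2 * ∑ i, (partialDeriv' Φ i x)^2 := by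
      rw [Finset.mul_sum]
      exact Finset.sum_congr rfl fun i _ => by rw [hgrad x hx i]; ring
    rw [hs, Real.sqrt_mul (by positivity), Real.sqrt_sq (hc0 x).le]
  -- choose M'
  refine ⟨M * (1 + a₀ * Real.exp (a₀ * |B|)), by positivity, ?_⟩
  intro x hx
  set T := Matrix.trace (A x) with hT
  set G := gradNorm Φ x with hG
  set Q := ∑ i, ∑ j, A x i j * partialDeriv' Φ j x * partialDeriv' Φ i x with hQdef
  -- trace identity
  have htr : Matrix.trace (A x * hessian g x)
      = c x * (Matrix.trace (A x * hessian Φ x) - a₀ * Q) := by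
    simp only [Matrix.trace, Matrix.diag, Matrix.mul_apply]
    rw [hQdef, Finset.mul_sum, ← Finset.sum_sub_distrib, Finset.mul_sum]
    refine Finset.sum_congr rfl fun i _ => ?_
    rw [Finset.mul_sum, ← Finset.sum_sub_distrib, Finset.mul_sum]
    refine Finset.sum_congr rfl fun j _ => ?_
    rw [hhess x hx j i]
    ring
  -- Q ≥ 0
  have hQ0 : 0 ≤ Q := by
    have h := (hA x hx).dotProduct_mulVec_nonneg (fun i => partialDeriv' Φ i x)
    simp only [star_trivial, dotProduct, Matrix.mulVec, Finset.mul_sum] at h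
    refine le_trans h (le_of_eq ?_)
    rw [hQdef]
    exact Finset.sum_congr rfl fun i _ => Finset.sum_congr rfl fun j _ => by ring
  -- T ≥ 0
  have hT0 : 0 ≤ T := by
    rw [hT, Matrix.trace]
    refine Finset.sum_nonneg fun i _ => ?_
    have h := (hA x hx).dotProduct_mulVec_nonneg (Pi.single i 1)
    simpa [dotProduct, Matrix.mulVec, Pi.single_apply, Finset.mul_sum] using h
  have hG0 : 0 ≤ G := Real.sqrt_nonneg _
  have hcB : c x ≤ a₀ * Real.exp (a₀ * |B|) := by
    have h1 : -a₀ * Φ x ≤ a₀ * |B| := by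
      have h2 : |Φ x| ≤ |B| := (hB x hx).trans (le_abs_self B)
      nlinarith [abs_nonneg (Φ x), neg_abs_le (Φ x)]
    exact mul_le_mul_of_nonneg_left (Real.exp_le_exp.2 h1) ha₀0.le
  have hineqx := hineq x hx
  rw [htr, hgn x hx]
  have key : c x * (Matrix.trace (A x * hessian Φ x) - a₀ * Q) ≤ c x * M * (1 + G + T) := by
    nlinarith [mul_le_mul_of_nonneg_left hineqx (hc0 x).le,
      mul_nonneg (mul_nonneg (hc0 x).le (sub_nonneg.2 ha₀)) hQ0]
  refine key.trans ?_
  have hMle : M ≤ M * (1 + a₀ * Real.exp (a₀ * |B|)) := by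
    nlinarith [mul_pos (mul_pos hM ha₀0) (Real.exp_pos (a₀ * |B|))]
  have hcMle : c x * M ≤ M * (1 + a₀ * Real.exp (a₀ * |B|)) := by
    nlinarith [mul_le_mul_of_nonneg_right hcB hM.le]
  nlinarith [mul_nonneg (hc0 x).le hG0, mul_le_mul_of_nonneg_right hMle (mul_nonneg (hc0 x).le hG0),
    mul_le_mul_of_nonneg_right hcMle hT0, mul_le_mul_of_nonneg_right hcMle hG0]
end
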